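/- arXiv:2409.02206 — 5 statements merged into one kernel-verified Lean document; each statement's English description precedes it below -/
import Mathlib

section
/- For any Boolean function $f: \{0,1\}^d \to \{0,1\}$, the directed influence satisfies $I^+_f \ge \varepsilon_f$, where $\varepsilon_f$ is the distance of $f$ to monotonicity. -/
open scoped Classical

/-- Vertices of the `d`-dimensional hypercube. -/
abbrev Vtx (d : ℕ) := Fin d → Bool

/-- Hamming weight. -/
noncomputable def wt {d : ℕ} (x : Vtx d) : ℕ := (Finset.univ.filter (fun i => x i = true)).card

/-- Coordinatewise order on the hypercube. -/
def hle {d : ℕ} (x y : Vtx d) : Prop := ∀ i, x i = true → y i = true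

/-- Strict coordinatewise order. -/
def hlt {d : ℕ} (x y : Vtx d) : Prop := hle x y ∧ x ≠ y

/-- Directed hypercube edge: `y` is obtained from `x` by flipping one `0` to `1`. -/
def IsEdge {d : ℕ} (x y : Vtx d) : Prop := hle x y ∧ wt y = wt x + 1

/-- The `k`-th layer: vertices of Hamming weight `k`. -/
noncomputable def layer (d k : ℕ) : Finset (Vtx d) := Finset.univ.filter (fun x => wt x = k)

/-- The (directed) edges traversed by a path, given as a list of vertices. -/
def edgesL {α : Type*} (p : List α) : List (α × α) := p.zip p.tail

/-- A matched pair: a bijection `φ : A → B` with `a ≺ φ a`. -/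
def MatchedFrom {d : ℕ} (A B : Finset (Vtx d)) (φ : Vtx d → Vtx d) : Prop :=
  Set.BijOn φ ↑A ↑B ∧ ∀ s ∈ A, hlt s (φ s)

/-- Monotone Boolean function on the hypercube. -/
def MonotoneB {d : ℕ} (f : Vtx d → Bool) : Prop := ∀ x y, hle x y → f x = true → f y = true

/-- The violated edges of `f`: hypercube edges `(x,y)` with `f x = 1 > 0 = f y`. -/
noncomputable def violatedEdges (d : ℕ) (f : Vtx d → Bool) : Finset (Vtx d × Vtx d) :=
  Finset.univ.filter (fun e => IsEdge e.1 e.2 ∧ f e.1 = true ∧ f e.2 = false)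


/- ### Auxiliary development for the proof -/

namespace DP

variable {d : ℕ}

noncomputable def flipT (i : Fin d) (x : Vtx d) : Vtx d := Function.update x i true
noncomputable def flipF (i : Fin d) (x : Vtx d) : Vtx d := Function.update x i false

lemma flipT_same (i : Fin d) (x : Vtx d) : flipT i x i = true := by
  simp [flipT]

lemma flipT_other (i j : Fin d) (x : Vtx d) (h : j ≠ i) : flipT i x j = x j := by
  simp [flipT, Function.update_of_ne h]

lemma flipF_flipT (i : Fin d) (x : Vtx d) (h : x i = false) : flipF i (flipT i x) = x := by
  funext j
  by_cases hj : j = i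
  · subst hj; simp [flipF, h]
  · simp [flipF, flipT, Function.update_of_ne hj]

lemma flipT_comm (i j : Fin d) (x : Vtx d) (h : i ≠ j) :
    flipT i (flipT j x) = flipT j (flipT i x) := by
  unfold flipT
  exact Function.update_comm h.symm _ _ _

noncomputable def pp (q : ℚ) : ℚ := max q 0

lemma pp_nonneg (q : ℚ) : 0 ≤ pp q := le_max_right _ _

noncomputable def phi (i : Fin d) (h : Vtx d → ℚ) : ℚ :=
  ∑ x ∈ Finset.univ.filter (fun x => x i = false), pp (h x - h (flipT i x))

lemma phi_nonneg (i : Fin d) (h : Vtx d → ℚ) : 0 ≤ phi i h :=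
  Finset.sum_nonneg fun x _ => pp_nonneg _

end DP

namespace DP
variable {d : ℕ}

lemma flipT_flipF (i : Fin d) (x : Vtx d) (h : x i = true) : flipT i (flipF i x) = x := by
  funext j
  by_cases hj : j = i
  · subst hj; simp [flipF, flipT, h]
  · simp [flipF, flipT, Function.update_of_ne hj]

lemma flipF_same (i : Fin d) (x : Vtx d) : flipF i x i = false := by simp [flipF]

lemma pair_sum (i : Fin d) (p : Vtx d → Prop) [DecidablePred p] (hpT : ∀ x, p x → p (flipT i x))
    (hpF : ∀ x, p x → p (flipF i x)) (G : Vtx d → ℚ) :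
    ∑ x ∈ Finset.univ.filter (fun x => p x), G x
      = ∑ x ∈ Finset.univ.filter (fun x => p x ∧ x i = false), (G x + G (flipT i x)) := by
  rw [Finset.sum_add_distrib]
  have h1 : ∑ x ∈ Finset.univ.filter (fun x => p x ∧ x i = false), G (flipT i x)
      = ∑ x ∈ Finset.univ.filter (fun x => p x ∧ x i = true), G x := by
    apply Finset.sum_bij' (fun x _ => flipT i x) (fun x _ => flipF i x)
    · intro a ha
      simp only [Finset.mem_filter, Finset.mem_univ, true_and] at ha ⊢
      exact ⟨hpT a ha.1, flipT_same i a⟩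
    · intro a ha
      simp only [Finset.mem_filter, Finset.mem_univ, true_and] at ha ⊢
      exact ⟨hpF a ha.1, flipF_same i a⟩
    · intro a ha
      simp only [Finset.mem_filter, Finset.mem_univ, true_and] at ha
      exact flipF_flipT i a ha.2
    · intro a ha
      simp only [Finset.mem_filter, Finset.mem_univ, true_and] at ha
      exact flipT_flipF i a ha.2
    · intro a _; rfl
  rw [h1]
  rw [← Finset.sum_filter_add_sum_filter_not (Finset.univ.filter (fun x => p x))
      (fun x => x i = false) G]
  rw [Finset.filter_filter, Finset.filter_filter]
  congr 1
  apply Finset.sum_congr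
  · apply Finset.filter_congr
    intro x _
    simp [Bool.not_eq_false]
  · intros; rfl

noncomputable def Aop (i : Fin d) (h : Vtx d → ℚ) : Vtx d → ℚ := fun x =>
  if x i = false then min (h x) ((h x + h (flipT i x)) / 2)
  else max (h x) ((h (flipF i x) + h x) / 2)

lemma Aop_lo {i : Fin d} {x : Vtx d} (h : Vtx d → ℚ) (hx : x i = false) :
    Aop i h x = min (h x) ((h x + h (flipT i x)) / 2) := if_pos hx

lemma Aop_hi {i : Fin d} {x : Vtx d} (h : Vtx d → ℚ) (hx : x i = false) :
    Aop i h (flipT i x) = max (h (flipT i x)) ((h x + h (flipT i x)) / 2) := by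
  unfold Aop
  rw [if_neg (by simp [flipT_same]), flipF_flipT i x hx]

lemma scalar_cost (a c : ℚ) :
    |min a ((a + c) / 2) - a| + |max c ((a + c) / 2) - c| = pp (a - c) := by
  unfold pp
  rcases le_total a c with h | h
  · rw [min_eq_left (by linarith), max_eq_left (by linarith),
      max_eq_right (by linarith : a - c ≤ 0)]
    simp
  · rw [min_eq_right (by linarith), max_eq_right (by linarith),
      max_eq_left (by linarith : (0:ℚ) ≤ a - c)]
    rw [abs_of_nonpos (by linarith), abs_of_nonneg (by linarith)]
    ring

lemma scalar_main (a b c e : ℚ) :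
    pp (min a ((a + c) / 2) - min b ((b + e) / 2))
      + pp (max c ((a + c) / 2) - max e ((b + e) / 2))
      ≤ pp (a - b) + pp (c - e) := by
  rcases le_total a c with h1 | h1 <;> rcases le_total b e with h2 | h2
  · rw [min_eq_left (show a ≤ (a+c)/2 by linarith), max_eq_left (show (a+c)/2 ≤ c by linarith),
      min_eq_left (show b ≤ (b+e)/2 by linarith), max_eq_left (show (b+e)/2 ≤ e by linarith)]
  · rw [min_eq_left (show a ≤ (a+c)/2 by linarith), max_eq_left (show (a+c)/2 ≤ c by linarith),
      min_eq_right (show (b+e)/2 ≤ b by linarith), max_eq_right (show e ≤ (b+e)/2 by linarith)]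
    simp only [pp, max_def]
    split_ifs <;> linarith
  · rw [min_eq_right (show (a+c)/2 ≤ a by linarith), max_eq_right (show c ≤ (a+c)/2 by linarith),
      min_eq_left (show b ≤ (b+e)/2 by linarith), max_eq_left (show (b+e)/2 ≤ e by linarith)]
    simp only [pp, max_def]
    split_ifs <;> linarith
  · rw [min_eq_right (show (a+c)/2 ≤ a by linarith), max_eq_right (show c ≤ (a+c)/2 by linarith),
      min_eq_right (show (b+e)/2 ≤ b by linarith), max_eq_right (show e ≤ (b+e)/2 by linarith)]
    simp only [pp, max_def]
    split_ifs <;> linarith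

end DP

namespace DP
variable {d : ℕ}

noncomputable def fQ (f : Vtx d → Bool) : Vtx d → ℚ := fun x => if f x then 1 else 0

noncomputable def err (f : Vtx d → Bool) (h : Vtx d → ℚ) : ℚ := ∑ x, |fQ f x - h x|

lemma univ_eq_filter_true : (Finset.univ : Finset (Vtx d)) = Finset.univ.filter (fun _ => True) := by
  simp

/-- L1 : the ℓ¹ cost of `Aop i` equals `phi i`. -/
lemma cost_Aop (i : Fin d) (h : Vtx d → ℚ) :
    ∑ x, |Aop i h x - h x| = phi i h := by
  rw [show (Finset.univ : Finset (Vtx d)) = Finset.univ.filter (fun _ => True) from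
      (Finset.filter_true _).symm,
    pair_sum i (fun _ => True) (fun _ _ => trivial) (fun _ _ => trivial)
      (fun x => |Aop i h x - h x|)]
  unfold phi
  apply Finset.sum_congr
  · apply Finset.filter_congr; intro x _; simp
  · intro x hx
    simp only [Finset.mem_filter] at hx
    rw [Aop_lo h hx.2, Aop_hi h hx.2, scalar_cost]

/-- L2 : `Aop i` sorts direction `i`. -/
lemma sorted_Aop (i : Fin d) (h : Vtx d → ℚ) {x : Vtx d} (hx : x i = false) :
    Aop i h x ≤ Aop i h (flipT i x) := by
  rw [Aop_lo h hx, Aop_hi h hx]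
  exact le_trans (min_le_right _ _) (le_max_right _ _)

lemma phi_Aop_self (i : Fin d) (h : Vtx d → ℚ) : phi i (Aop i h) = 0 := by
  unfold phi
  apply Finset.sum_eq_zero
  intro x hx
  simp only [Finset.mem_filter] at hx
  unfold pp
  rw [max_eq_right]
  linarith [sorted_Aop i h hx.2]

/-- L3 : `Aop i` does not increase `phi j` for `j ≠ i`. -/
lemma phi_Aop_other {i j : Fin d} (hij : j ≠ i) (h : Vtx d → ℚ) :
    phi j (Aop i h) ≤ phi j h := by
  unfold phi
  rw [pair_sum i (fun x => x j = false)
      (fun x hx => by show flipT i x j = false; rw [flipT_other i j x hij]; exact hx)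
      (fun x hx => by show flipF i x j = false; simp only [flipF, Function.update_of_ne hij]; exact hx)
      (fun x => pp (Aop i h x - Aop i h (flipT j x))),
    pair_sum i (fun x => x j = false)
      (fun x hx => by show flipT i x j = false; rw [flipT_other i j x hij]; exact hx)
      (fun x hx => by show flipF i x j = false; simp only [flipF, Function.update_of_ne hij]; exact hx)
      (fun x => pp (h x - h (flipT j x)))]
  apply Finset.sum_le_sum
  intro x hx
  simp only [Finset.mem_filter] at hx
  obtain ⟨-, hxj, hxi⟩ := hx
  have hxj_i : flipT j x i = false := by rw [flipT_other j i x (Ne.symm hij)]; exact hxi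
  have hcomm : flipT j (flipT i x) = flipT i (flipT j x) := flipT_comm j i x hij
  have e1 : Aop i h x = min (h x) ((h x + h (flipT i x)) / 2) := Aop_lo h hxi
  have e2 : Aop i h (flipT j x)
      = min (h (flipT j x)) ((h (flipT j x) + h (flipT i (flipT j x))) / 2) := Aop_lo h hxj_i
  have e3 : Aop i h (flipT i x) = max (h (flipT i x)) ((h x + h (flipT i x)) / 2) :=
    Aop_hi h hxi
  have e4 : Aop i h (flipT j (flipT i x))
      = max (h (flipT i (flipT j x))) ((h (flipT j x) + h (flipT i (flipT j x))) / 2) := by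
    rw [hcomm]; exact Aop_hi h hxj_i
  rw [e1, e2, e3, e4, hcomm]
  exact scalar_main (h x) (h (flipT j x)) (h (flipT i x)) (h (flipT i (flipT j x)))

lemma err_Aop (f : Vtx d → Bool) (i : Fin d) (h : Vtx d → ℚ) :
    err f (Aop i h) ≤ err f h + phi i h := by
  rw [← cost_Aop i h]
  unfold err
  rw [← Finset.sum_add_distrib]
  apply Finset.sum_le_sum
  intro x _
  calc |fQ f x - Aop i h x| ≤ |fQ f x - h x| + |h x - Aop i h x| := abs_sub_le _ _ _
  _ = |fQ f x - h x| + |Aop i h x - h x| := by rw [abs_sub_comm (h x)]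

lemma phi_Aop_all (i j : Fin d) (h : Vtx d → ℚ) : phi j (Aop i h) ≤ phi j h := by
  by_cases hij : j = i
  · subst hij; rw [phi_Aop_self]; exact phi_nonneg _ _
  · exact phi_Aop_other hij h

lemma range_Aop (i : Fin d) (h : Vtx d → ℚ) (hr : ∀ x, 0 ≤ h x ∧ h x ≤ 1) :
    ∀ x, 0 ≤ Aop i h x ∧ Aop i h x ≤ 1 := by
  intro x
  unfold Aop
  split_ifs
  · constructor
    · apply le_min (hr x).1; have := (hr (flipT i x)).1; have := (hr x).1; linarith
    · exact le_trans (min_le_left _ _) (hr x).2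
  · constructor
    · exact le_trans (hr x).1 (le_max_left _ _)
    · apply max_le (hr x).2
      have := (hr (flipF i x)).2; have := (hr x).2; linarith

/-- The fold over a list of directions. -/
lemma fold_lemma (f : Vtx d → Bool) :
    ∀ l : List (Fin d), ∀ h : Vtx d → ℚ, (∀ x, 0 ≤ h x ∧ h x ≤ 1) →
    ∃ h' : Vtx d → ℚ, (∀ x, 0 ≤ h' x ∧ h' x ≤ 1) ∧
      (∀ j, phi j h' ≤ phi j h) ∧ (∀ j ∈ l, phi j h' = 0) ∧
      err f h' ≤ err f h + (l.map (fun j => phi j h)).sum := by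
  intro l
  induction l with
  | nil =>
    intro h hr
    exact ⟨h, hr, fun j => le_refl _, fun j hj => absurd hj List.not_mem_nil, by simp⟩
  | cons i t ih =>
    intro h hr
    obtain ⟨h', hr', hle', hzero, herr⟩ := ih (Aop i h) (range_Aop i h hr)
    refine ⟨h', hr', ?_, ?_, ?_⟩
    · intro j; exact le_trans (hle' j) (phi_Aop_all i j h)
    · intro j hj
      rcases List.mem_cons.mp hj with hj | hj
      · subst hj
        have h1 := le_trans (hle' j) (le_of_eq (phi_Aop_self j h))
        exact le_antisymm h1 (phi_nonneg _ _)
      · exact hzero j hj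
    · calc err f h' ≤ err f (Aop i h) + (t.map (fun j => phi j (Aop i h))).sum := herr
        _ ≤ (err f h + phi i h) + (t.map (fun j => phi j h)).sum := by
            apply add_le_add (err_Aop f i h)
            apply List.sum_le_sum
            intro j hj
            exact phi_Aop_all i j h
        _ = err f h + ((i :: t).map (fun j => phi j h)).sum := by
            simp [List.sum_cons]; ring

end DP

namespace DP
variable {d : ℕ}

lemma edge_sorted_of_phi_zero {i : Fin d} {h : Vtx d → ℚ} (hz : phi i h = 0) :
    ∀ x : Vtx d, x i = false → h x ≤ h (flipT i x) := by
  intro x hx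
  have hall := (Finset.sum_eq_zero_iff_of_nonneg (fun x _ => pp_nonneg _)).mp hz
  have := hall x (by simp [hx])
  unfold pp at this
  have h0 : h x - h (flipT i x) ≤ 0 := by
    by_contra hpos
    push_neg at hpos
    rw [max_eq_left (le_of_lt hpos)] at this
    linarith
  linarith

lemma mono_of_edges (h : Vtx d → ℚ)
    (he : ∀ (i : Fin d) (x : Vtx d), x i = false → h x ≤ h (flipT i x)) :
    ∀ (n : ℕ) (x y : Vtx d), (Finset.univ.filter (fun i => x i ≠ y i)).card ≤ n →
      hle x y → h x ≤ h y := by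
  intro n
  induction n with
  | zero =>
    intro x y hc _
    have hempty : (Finset.univ.filter (fun i => x i ≠ y i)) = ∅ :=
      Finset.card_eq_zero.mp (Nat.le_zero.mp hc)
    have : x = y := by
      funext i
      by_contra hi
      have : i ∈ Finset.univ.filter (fun i => x i ≠ y i) := by simp [hi]
      rw [hempty] at this
      exact absurd this (Finset.notMem_empty i)
    rw [this]
  | succ n ih =>
    intro x y hc hxy
    by_cases hxyeq : x = y
    · rw [hxyeq]
    · have hex : ∃ i, x i ≠ y i := by
        by_contra hno
        push_neg at hno
        exact hxyeq (funext hno)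
      obtain ⟨i, hi⟩ := hex
      have hxi : x i = false := by
        cases hxv : x i
        · rfl
        · exact absurd (hxy i hxv) (fun hyv => hi (by rw [hxv, hyv]))
      have hyi : y i = true := by
        cases hyv : y i
        · exact absurd (by rw [hxi, hyv]) hi
        · rfl
      have hx'y : hle (flipT i x) y := by
        intro j hj
        by_cases hji : j = i
        · subst hji; exact hyi
        · rw [flipT_other i j x hji] at hj
          exact hxy j hj
      have hmem : i ∈ Finset.univ.filter (fun i => x i ≠ y i) := by simp [hi]
      have hsub : (Finset.univ.filter (fun j => flipT i x j ≠ y j))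
          ⊆ (Finset.univ.filter (fun i => x i ≠ y i)).erase i := by
        intro j hj
        simp only [Finset.mem_filter, Finset.mem_univ, true_and] at hj
        rw [Finset.mem_erase]
        constructor
        · intro hji
          subst hji
          exact hj (by rw [flipT_same, hyi])
        · have hji : j ≠ i := by
            intro hji; subst hji; exact hj (by rw [flipT_same, hyi])
          simp only [Finset.mem_filter, Finset.mem_univ, true_and]
          rw [flipT_other i j x hji] at hj
          exact hj
      have hcard : (Finset.univ.filter (fun j => flipT i x j ≠ y j)).card ≤ n := by
        have := Finset.card_le_card hsub
        rw [Finset.card_erase_of_mem hmem] at this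
        omega
      exact le_trans (he i x hxi) (ih (flipT i x) y hcard hx'y)

end DP

namespace DP
variable {d : ℕ}

lemma rounding (f : Vtx d → Bool) :
    ∀ (n : ℕ) (h : Vtx d → ℚ),
      ((Finset.univ.image h).filter (fun v => v ≠ 0 ∧ v ≠ 1)).card ≤ n →
      (∀ x, 0 ≤ h x ∧ h x ≤ 1) → (∀ x y, hle x y → h x ≤ h y) →
      ∃ g : Vtx d → Bool, MonotoneB g ∧
        ((Finset.univ.filter (fun x => f x ≠ g x)).card : ℚ) ≤ err f h := by
  intro n
  induction n with
  | zero =>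
    intro h hc hr hmono
    have hempty : ((Finset.univ.image h).filter (fun v => v ≠ 0 ∧ v ≠ 1)) = ∅ :=
      Finset.card_eq_zero.mp (Nat.le_zero.mp hc)
    have hval : ∀ x, h x = 0 ∨ h x = 1 := by
      intro x
      by_contra hcon
      push_neg at hcon
      have : h x ∈ ((Finset.univ.image h).filter (fun v => v ≠ 0 ∧ v ≠ 1)) := by
        simp only [Finset.mem_filter, Finset.mem_image]
        exact ⟨⟨x, Finset.mem_univ x, rfl⟩, hcon.1, hcon.2⟩
      rw [hempty] at this
      exact absurd this (Finset.notMem_empty _)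
    refine ⟨fun x => decide (h x = 1), ?_, ?_⟩
    · intro x y hxy hgx
      have hx1 : h x = 1 := of_decide_eq_true hgx
      have : h y = 1 := le_antisymm (hr y).2 (hx1 ▸ hmono x y hxy)
      simp [this]
    · unfold err
      calc ((Finset.univ.filter (fun x => f x ≠ decide (h x = 1))).card : ℚ)
          = ∑ x, (if f x ≠ decide (h x = 1) then (1:ℚ) else 0) := by
            rw [Finset.card_filter]
            push_cast
            apply Finset.sum_congr rfl
            intro x _
            split <;> simp
        _ ≤ ∑ x, |fQ f x - h x| := by
            apply Finset.sum_le_sum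
            intro x _
            by_cases hP : f x ≠ decide (h x = 1)
            · rw [if_pos hP]
              rcases hval x with h0 | h0 <;> cases hfx : f x <;>
                simp [fQ, h0, hfx] at hP ⊢
            · rw [if_neg hP]
              exact abs_nonneg _
  | succ n ih =>
    intro h hc hr hmono
    set S := ((Finset.univ.image h).filter (fun v => v ≠ 0 ∧ v ≠ 1)) with hS
    by_cases hSe : S = ∅
    · exact ih h (by rw [← hS, hSe]; simp) hr hmono
    · have hSne : S.Nonempty := Finset.nonempty_of_ne_empty hSe
      set v := S.max' hSne with hvdef
      have hvS : v ∈ S := S.max'_mem hSne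
      have hvmax : ∀ u ∈ S, u ≤ v := fun u hu => S.le_max' u hu
      simp only [hS, Finset.mem_filter, Finset.mem_image] at hvS
      obtain ⟨⟨x₀, -, hx₀⟩, hv0, hv1⟩ := hvS
      have hv_range : 0 ≤ v ∧ v ≤ 1 := hx₀ ▸ hr x₀
      have hvpos : 0 < v := lt_of_le_of_ne hv_range.1 (Ne.symm hv0)
      have hvlt1 : v < 1 := lt_of_le_of_ne hv_range.2 hv1
      set W := insert (0:ℚ) ((Finset.univ.image h).filter (fun u => u < v)) with hW
      have hWne : W.Nonempty := ⟨0, Finset.mem_insert_self _ _⟩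
      set w := W.max' hWne with hwdef
      have hwW : w ∈ W := W.max'_mem hWne
      have hwv : w < v := by
        rcases Finset.mem_insert.mp hwW with h0 | hmem
        · rw [h0]; exact hvpos
        · exact (Finset.mem_filter.mp hmem).2
      have hw0 : 0 ≤ w := W.le_max' 0 (Finset.mem_insert_self _ _)
      have hle_w : ∀ u ∈ Finset.univ.image h, u < v → u ≤ w := by
        intro u hu hlt
        exact W.le_max' u (Finset.mem_insert_of_mem (Finset.mem_filter.mpr ⟨hu, hlt⟩))
      have htri : ∀ u ∈ Finset.univ.image h, u ≤ w ∨ u = v ∨ u = 1 := by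
        intro u hu
        rcases lt_trichotomy u v with hlt | heq | hgt
        · exact Or.inl (hle_w u hu hlt)
        · exact Or.inr (Or.inl heq)
        · right; right
          by_contra hu1
          have hu0 : u ≠ 0 := by
            intro h0; rw [h0] at hgt; linarith
          have : u ∈ S := by
            rw [hS]; exact Finset.mem_filter.mpr ⟨hu, hu0, hu1⟩
          linarith [hvmax u this]
      have hmem_img : ∀ x, h x ∈ Finset.univ.image h := fun x =>
        Finset.mem_image.mpr ⟨x, Finset.mem_univ x, rfl⟩
      have hbig : ∀ x, v < h x → h x = 1 := by
        intro x hx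
        rcases htri (h x) (hmem_img x) with hle | heq | h1
        · linarith
        · linarith [heq]
        · exact h1
      -- the two modified functions
      set hdn : Vtx d → ℚ := fun x => if h x = v then w else h x with hdndef
      set hup : Vtx d → ℚ := fun x => if h x = v then 1 else h x with hupdef
      have hdn_mono : ∀ x y, hle x y → hdn x ≤ hdn y := by
        intro x y hxy
        have hhxy := hmono x y hxy
        simp only [hdndef]
        by_cases hx : h x = v <;> by_cases hy : h y = v <;> simp [hx, hy]
        · have : v < h y := lt_of_le_of_ne (hx ▸ hhxy) (Ne.symm hy)
          rw [hbig y this]; linarith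
        · have : h x < v := lt_of_le_of_ne (hy ▸ hhxy) hx
          exact hle_w _ (hmem_img x) this
        · exact hhxy
      have hup_mono : ∀ x y, hle x y → hup x ≤ hup y := by
        intro x y hxy
        have hhxy := hmono x y hxy
        simp only [hupdef]
        by_cases hx : h x = v <;> by_cases hy : h y = v <;> simp [hx, hy]
        · have : v < h y := lt_of_le_of_ne (hx ▸ hhxy) (Ne.symm hy)
          rw [hbig y this]
        · exact (hr x).2
        · exact hhxy
      have hdn_range : ∀ x, 0 ≤ hdn x ∧ hdn x ≤ 1 := by
        intro x
        simp only [hdndef]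
        by_cases hx : h x = v <;> simp [hx]
        · exact ⟨hw0, by linarith⟩
        · exact hr x
      have hup_range : ∀ x, 0 ≤ hup x ∧ hup x ≤ 1 := by
        intro x
        simp only [hupdef]
        by_cases hx : h x = v <;> simp [hx]
        exact hr x
      have hcard' : S.card ≤ n + 1 := hc
      have hvS' : v ∈ S := S.max'_mem hSne
      have hdn_card :
          ((Finset.univ.image hdn).filter (fun u => u ≠ 0 ∧ u ≠ 1)).card ≤ n := by
        have hsub : (Finset.univ.image hdn).filter (fun u => u ≠ 0 ∧ u ≠ 1) ⊆ S.erase v := by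
          intro u hu
          simp only [Finset.mem_filter, Finset.mem_image] at hu
          obtain ⟨⟨x, -, hx⟩, hu0, hu1⟩ := hu
          simp only [hdndef] at hx
          rw [Finset.mem_erase, hS, Finset.mem_filter]
          by_cases hxv : h x = v
          · rw [if_pos hxv] at hx
            subst hx
            have hwim : w ∈ Finset.univ.image h := by
              rcases Finset.mem_insert.mp hwW with h0 | hmem
              · exact absurd h0 hu0
              · exact (Finset.mem_filter.mp hmem).1
            exact ⟨ne_of_lt hwv, hwim, hu0, hu1⟩
          · rw [if_neg hxv] at hx
            subst hx
            exact ⟨hxv, hmem_img x, hu0, hu1⟩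
        calc ((Finset.univ.image hdn).filter (fun u => u ≠ 0 ∧ u ≠ 1)).card
            ≤ (S.erase v).card := Finset.card_le_card hsub
          _ = S.card - 1 := Finset.card_erase_of_mem hvS'
          _ ≤ n := by omega
      have hup_card :
          ((Finset.univ.image hup).filter (fun u => u ≠ 0 ∧ u ≠ 1)).card ≤ n := by
        have hsub : (Finset.univ.image hup).filter (fun u => u ≠ 0 ∧ u ≠ 1) ⊆ S.erase v := by
          intro u hu
          simp only [Finset.mem_filter, Finset.mem_image] at hu
          obtain ⟨⟨x, -, hx⟩, hu0, hu1⟩ := hu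
          simp only [hupdef] at hx
          rw [Finset.mem_erase, hS, Finset.mem_filter]
          by_cases hxv : h x = v
          · rw [if_pos hxv] at hx
            exact absurd hx.symm hu1
          · rw [if_neg hxv] at hx
            subst hx
            exact ⟨hxv, hmem_img x, hu0, hu1⟩
        calc ((Finset.univ.image hup).filter (fun u => u ≠ 0 ∧ u ≠ 1)).card
            ≤ (S.erase v).card := Finset.card_le_card hsub
          _ = S.card - 1 := Finset.card_erase_of_mem hvS'
          _ ≤ n := by omega
      -- the convexity identity
      have hE : (1 - v) * err f hdn + (v - w) * err f hup = (1 - w) * err f h := by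
        unfold err
        rw [Finset.mul_sum, Finset.mul_sum, Finset.mul_sum, ← Finset.sum_add_distrib]
        apply Finset.sum_congr rfl
        intro x _
        simp only [hdndef, hupdef]
        by_cases hxv : h x = v
        · rw [if_pos hxv, if_pos hxv, hxv]
          cases hfx : f x
          · have hfq : fQ f x = (0:ℚ) := by simp [fQ, hfx]
            rw [hfq, abs_of_nonpos (by linarith), abs_of_nonpos (by linarith),
              abs_of_nonpos (by linarith)]
            ring
          · have hfq : fQ f x = (1:ℚ) := by simp [fQ, hfx]
            rw [hfq, abs_of_nonneg (by linarith), abs_of_nonneg (by linarith),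
              abs_of_nonneg (by linarith)]
            ring
        · rw [if_neg hxv, if_neg hxv]
          ring
      have hmin : err f hdn ≤ err f h ∨ err f hup ≤ err f h := by
        by_contra hcon
        push_neg at hcon
        obtain ⟨h1, h2⟩ := hcon
        have e1 : (1 - v) * err f h < (1 - v) * err f hdn :=
          mul_lt_mul_of_pos_left h1 (by linarith)
        have e2 : (v - w) * err f h < (v - w) * err f hup :=
          mul_lt_mul_of_pos_left h2 (by linarith)
        nlinarith [hE]
      rcases hmin with hgood | hgood
      · obtain ⟨g, hg1, hg2⟩ := ih hdn hdn_card hdn_range hdn_mono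
        exact ⟨g, hg1, le_trans hg2 hgood⟩
      · obtain ⟨g, hg1, hg2⟩ := ih hup hup_card hup_range hup_mono
        exact ⟨g, hg1, le_trans hg2 hgood⟩

end DP

namespace DP
variable {d : ℕ}

lemma wt_flipT {i : Fin d} {x : Vtx d} (hx : x i = false) : wt (flipT i x) = wt x + 1 := by
  unfold wt
  have hset : Finset.univ.filter (fun j => flipT i x j = true)
      = insert i (Finset.univ.filter (fun j => x j = true)) := by
    ext j
    simp only [Finset.mem_filter, Finset.mem_insert, Finset.mem_univ, true_and]
    by_cases hj : j = i
    · subst hj; simp [flipT_same]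
    · simp [flipT_other i j x hj, hj]
  rw [hset, Finset.card_insert_of_notMem (by simp [hx])]

lemma isEdge_iff (x y : Vtx d) : IsEdge x y ↔ ∃ i, x i = false ∧ y = flipT i x := by
  constructor
  · rintro ⟨hxy, hwt⟩
    have hsub : Finset.univ.filter (fun j => x j = true)
        ⊆ Finset.univ.filter (fun j => y j = true) := by
      intro j hj
      simp only [Finset.mem_filter, Finset.mem_univ, true_and] at hj ⊢
      exact hxy j hj
    have hlt : (Finset.univ.filter (fun j => x j = true)).card
        < (Finset.univ.filter (fun j => y j = true)).card := by
      unfold wt at hwt; omega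
    have hdiff : ((Finset.univ.filter (fun j => y j = true))
        \ (Finset.univ.filter (fun j => x j = true))).Nonempty := by
      rw [← Finset.card_pos, Finset.card_sdiff_of_subset hsub]
      omega
    obtain ⟨i, hi⟩ := hdiff
    rw [Finset.mem_sdiff, Finset.mem_filter, Finset.mem_filter] at hi
    simp only [Finset.mem_univ, true_and, not_and] at hi
    obtain ⟨hyi, hxi'⟩ := hi
    have hxi : x i = false := by
      cases hv : x i
      · rfl
      · exact absurd hv hxi'
    refine ⟨i, hxi, ?_⟩
    have hins : insert i (Finset.univ.filter (fun j => x j = true))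
        ⊆ Finset.univ.filter (fun j => y j = true) := by
      apply Finset.insert_subset (by simp [hyi]) hsub
    have heq : insert i (Finset.univ.filter (fun j => x j = true))
        = Finset.univ.filter (fun j => y j = true) := by
      apply Finset.eq_of_subset_of_card_le hins
      rw [Finset.card_insert_of_notMem (by simp [hxi])]
      unfold wt at hwt; omega
    funext j
    by_cases hj : j = i
    · subst hj; rw [hyi, flipT_same]
    · rw [flipT_other i j x hj]
      have hiff : y j = true ↔ x j = true := by
        have h1 : y j = true ↔ j ∈ Finset.univ.filter (fun j => y j = true) := by simp
        rw [h1, ← heq, Finset.mem_insert]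
        simp [hj]
      cases hxj : x j <;> cases hyj : y j <;> simp [hxj, hyj] at hiff ⊢
  · rintro ⟨i, hxi, rfl⟩
    refine ⟨?_, wt_flipT hxi⟩
    intro j hj
    by_cases hji : j = i
    · subst hji; exact flipT_same _ x
    · rw [flipT_other i j x hji]; exact hj

noncomputable def Bset (f : Vtx d → Bool) (i : Fin d) : Finset (Vtx d) :=
  Finset.univ.filter (fun x => x i = false ∧ f x = true ∧ f (flipT i x) = false)

lemma violated_eq_biUnion (f : Vtx d → Bool) :
    violatedEdges d f
      = Finset.univ.biUnion (fun i : Fin d => (Bset f i).image (fun x => (x, flipT i x))) := by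
  ext e
  constructor
  · intro he
    have he' : IsEdge e.1 e.2 ∧ f e.1 = true ∧ f e.2 = false := by
      simpa [violatedEdges] using he
    obtain ⟨hIsE, hf1, hf2⟩ := he'
    obtain ⟨i, hxi, hfe⟩ := (isEdge_iff e.1 e.2).mp hIsE
    apply Finset.mem_biUnion.mpr
    refine ⟨i, Finset.mem_univ i, Finset.mem_image.mpr ⟨e.1, ?_, ?_⟩⟩
    · exact Finset.mem_filter.mpr ⟨Finset.mem_univ _, hxi, hf1, by rw [← hfe]; exact hf2⟩
    · exact Prod.ext rfl hfe.symm
  · intro he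
    obtain ⟨i, -, hmem⟩ := Finset.mem_biUnion.mp he
    obtain ⟨x, hx, hxe⟩ := Finset.mem_image.mp hmem
    simp only [Bset, Finset.mem_filter, Finset.mem_univ, true_and] at hx
    obtain ⟨hxi, hf1, hf2⟩ := hx
    subst hxe
    simp only [violatedEdges, Finset.mem_filter, Finset.mem_univ, true_and]
    exact ⟨(isEdge_iff _ _).mpr ⟨i, hxi, rfl⟩, hf1, hf2⟩

lemma violated_card (f : Vtx d → Bool) :
    (violatedEdges d f).card = ∑ i : Fin d, (Bset f i).card := by
  rw [violated_eq_biUnion]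
  rw [Finset.card_biUnion]
  · apply Finset.sum_congr rfl
    intro i _
    apply Finset.card_image_of_injOn
    intro a _ b _ hab
    exact congrArg Prod.fst hab
  · intro i _ j _ hij
    rw [Function.onFun, Finset.disjoint_left]
    intro e he1 he2
    obtain ⟨a, ha, hae⟩ := Finset.mem_image.mp he1
    obtain ⟨b, hb, hbe⟩ := Finset.mem_image.mp he2
    simp only [Bset, Finset.mem_filter, Finset.mem_univ, true_and] at ha hb
    have hab : (a, flipT i a) = (b, flipT j b) := hae.trans hbe.symm
    have hab1 : a = b := congrArg Prod.fst hab
    subst hab1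
    have hab2 : flipT i a = flipT j a := congrArg Prod.snd hab
    have hcontra : flipT i a i = flipT j a i := by rw [hab2]
    rw [flipT_same, flipT_other j i a hij, ha.1] at hcontra
    exact absurd hcontra (by simp)

lemma cardQ (p : Vtx d → Prop) [DecidablePred p] :
    ((Finset.univ.filter p).card : ℚ) = ∑ x, if p x then (1:ℚ) else 0 := by
  rw [Finset.card_filter]
  push_cast
  apply Finset.sum_congr rfl
  intro x _
  split <;> simp

lemma phi_fQ (f : Vtx d → Bool) (i : Fin d) :
    phi i (fQ f) = ((Bset f i).card : ℚ) := by
  unfold phi Bset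
  rw [cardQ, Finset.sum_filter]
  apply Finset.sum_congr rfl
  intro x _
  by_cases hxi : x i = false
  · rw [if_pos hxi]
    cases hfx : f x <;> cases hfy : f (flipT i x) <;>
      simp [fQ, pp, hfx, hfy, hxi] <;> norm_num
  · rw [if_neg hxi, if_neg (by tauto)]

lemma err_fQ_self (f : Vtx d → Bool) : err f (fQ f) = 0 := by
  unfold err
  apply Finset.sum_eq_zero
  intro x _
  simp

lemma range_fQ (f : Vtx d → Bool) : ∀ x, 0 ≤ fQ f x ∧ fQ f x ≤ 1 := by
  intro x
  unfold fQ
  split <;> norm_num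

end DP


/-- **Directed Poincaré inequality** `I⁺_f ≥ ε_f`: there is a monotone function `g` whose
distance to `f` is at most `2^{-d}` times the number of violated edges of `f`. -/
theorem directed_poincare (d : ℕ) (f : Vtx d → Bool) :
    ∃ g : Vtx d → Bool, MonotoneB g ∧
      ((Finset.univ.filter (fun x => f x ≠ g x)).card : ℚ) / 2 ^ d ≤
        ((violatedEdges d f).card : ℚ) / 2 ^ d := by
  classical
  obtain ⟨h', hr', hle', hzero, herr⟩ :=
    DP.fold_lemma f (List.finRange d) (DP.fQ f) (DP.range_fQ f)
  have hzero' : ∀ j : Fin d, DP.phi j h' = 0 := fun j => hzero j (List.mem_finRange j)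
  have hmono : ∀ x y : Vtx d, hle x y → h' x ≤ h' y := by
    intro x y hxy
    apply DP.mono_of_edges h'
      (fun i x hx => DP.edge_sorted_of_phi_zero (hzero' i) x hx)
      ((Finset.univ.filter (fun i => x i ≠ y i)).card) x y (le_refl _) hxy
  have herr' : DP.err f h' ≤ ((violatedEdges d f).card : ℚ) := by
    have h1 : ((List.finRange d).map (fun j => DP.phi j (DP.fQ f))).sum
        = ∑ j : Fin d, DP.phi j (DP.fQ f) := by
      rw [Fin.sum_univ_def]
    calc DP.err f h' ≤ DP.err f (DP.fQ f)
          + ((List.finRange d).map (fun j => DP.phi j (DP.fQ f))).sum := herr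
      _ = ∑ j : Fin d, DP.phi j (DP.fQ f) := by rw [DP.err_fQ_self, h1, zero_add]
      _ = ∑ j : Fin d, ((DP.Bset f j).card : ℚ) := by
          apply Finset.sum_congr rfl
          intro j _
          exact DP.phi_fQ f j
      _ = ((violatedEdges d f).card : ℚ) := by
          rw [DP.violated_card f]
          push_cast
          rfl
  obtain ⟨g, hg1, hg2⟩ := DP.rounding f
    (((Finset.univ.image h').filter (fun v => v ≠ 0 ∧ v ≠ 1)).card) h' (le_refl _) hr' hmono
  refine ⟨g, hg1, ?_⟩
  have : ((Finset.univ.filter (fun x => f x ≠ g x)).card : ℚ)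
      ≤ ((violatedEdges d f).card : ℚ) := le_trans hg2 herr'
  gcongr
end

section
/- Let $S \subseteq \{0,1\}^d$ and let $f$ be the indicator function of $S$. Then the directed volume of $S$ equals $\varepsilon_f \cdot 2^d$, where $\varepsilon_f$ is the distance of $f$ to monotonicity. That is, the maximum size of a set $S' \subseteq S$ admitting a bijection $\phi$ to some $T' \subseteq \overline{S}$ with $s \prec \phi(s)$ for all $s \in S'$ equals $2^d$ times the distance of the indicator function of $S$ to monotonicity. -/
open scoped Classical

/-- `S` has a directed-volume certificate of size `m`: a matched pair from a subset of `S`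
to a subset of the complement of `S`. -/
def HasCert {d : ℕ} (S : Finset (Vtx d)) (m : ℕ) : Prop :=
  ∃ S' T' : Finset (Vtx d), ∃ φ : Vtx d → Vtx d,
    S' ⊆ S ∧ (∀ t ∈ T', t ∉ S) ∧ S'.card = m ∧ MatchedFrom S' T' φ

/-- The indicator function of `S`. -/
noncomputable def indic {d : ℕ} (S : Finset (Vtx d)) : Vtx d → Bool :=
  fun x => if x ∈ S then true else false

/-- König-type lemma: there is a vertex cover of the violation graph whose size is
at most the size of some certificate (matching). -/
lemma exists_cover (d : ℕ) (S : Finset (Vtx d)) :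
    ∃ C : Finset (Vtx d), ∃ m : ℕ, HasCert S m ∧ C.card ≤ m ∧
      ∀ x ∈ S, ∀ y, y ∉ S → hlt x y → x ∈ C ∨ y ∈ C := by
  -- neighborhoods
  set N : Vtx d → Finset (Vtx d) := fun x => Finset.univ.filter (fun y => y ∉ S ∧ hlt x y) with hN
  set defic : Finset (Vtx d) → ℕ := fun A => A.card - (A.biUnion N).card with hdefic
  set D : ℕ := S.powerset.sup defic with hD
  have hDle : ∀ A ⊆ S, defic A ≤ D := fun A hA => Finset.le_sup (Finset.mem_powerset.mpr hA)
  -- choose a maximizer with small neighborhood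
  obtain ⟨A₀, hA₀S, hA₀d, hA₀B⟩ :
      ∃ A₀, A₀ ⊆ S ∧ defic A₀ = D ∧ (A₀.biUnion N).card ≤ A₀.card := by
    rcases Nat.eq_zero_or_pos D with h0 | hpos
    · exact ⟨∅, Finset.empty_subset S, by simp [hdefic, h0], by simp⟩
    · obtain ⟨A₀, hmem, hsup⟩ := Finset.exists_mem_eq_sup S.powerset
        ⟨∅, Finset.mem_powerset.mpr (Finset.empty_subset S)⟩ defic
      have hval : defic A₀ = D := by rw [hD, hsup]
      refine ⟨A₀, Finset.mem_powerset.mp hmem, hval, ?_⟩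
      simp only [hdefic] at hval
      omega
  -- Hall's theorem with D dummy vertices
  set t : {x // x ∈ S} → Finset (Vtx d ⊕ Fin D) :=
    fun x => (N x.1).image Sum.inl ∪ Finset.univ.image Sum.inr with ht
  have hall : ∀ s' : Finset {x // x ∈ S}, s'.card ≤ (s'.biUnion t).card := by
    intro s'
    rcases s'.eq_empty_or_nonempty with rfl | hne
    · simp
    set A : Finset (Vtx d) := s'.image Subtype.val with hA
    have hAsub : A ⊆ S := by
      intro a ha
      simp only [hA, Finset.mem_image] at ha
      obtain ⟨⟨a, haS⟩, _, rfl⟩ := ha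
      exact haS
    have hcardA : A.card = s'.card := Finset.card_image_of_injective _ Subtype.val_injective
    have hsub : ((A.biUnion N).image Sum.inl ∪ (Finset.univ : Finset (Fin D)).image Sum.inr)
        ⊆ s'.biUnion t := by
      intro z hz
      rcases Finset.mem_union.mp hz with hz | hz
      · simp only [Finset.mem_image, Finset.mem_biUnion] at hz
        obtain ⟨y, ⟨a, haA, hyN⟩, rfl⟩ := hz
        simp only [hA, Finset.mem_image] at haA
        obtain ⟨a', ha', rfl⟩ := haA
        refine Finset.mem_biUnion.mpr ⟨a', ha', ?_⟩
        exact Finset.mem_union_left _ (Finset.mem_image_of_mem _ hyN)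
      · obtain ⟨a', ha'⟩ := hne
        simp only [Finset.mem_image] at hz
        obtain ⟨b, _, rfl⟩ := hz
        refine Finset.mem_biUnion.mpr ⟨a', ha', ?_⟩
        exact Finset.mem_union_right _ (Finset.mem_image_of_mem _ (Finset.mem_univ b))
    have hdisj : Disjoint ((A.biUnion N).image Sum.inl)
        ((Finset.univ : Finset (Fin D)).image Sum.inr) := by
      simp only [Finset.disjoint_left, Finset.mem_image]
      rintro z ⟨y, _, rfl⟩ ⟨b, _, h⟩
      exact Sum.inl_ne_inr h.symm
    have hcu : ((A.biUnion N).image Sum.inl ∪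
        (Finset.univ : Finset (Fin D)).image Sum.inr).card = (A.biUnion N).card + D := by
      rw [Finset.card_union_of_disjoint hdisj,
        Finset.card_image_of_injective _ Sum.inl_injective,
        Finset.card_image_of_injective _ Sum.inr_injective]
      simp
    have h1 : defic A ≤ D := hDle A hAsub
    have h2 : A.card ≤ (A.biUnion N).card + D := by
      simp only [hdefic] at h1; omega
    calc s'.card = A.card := hcardA.symm
      _ ≤ (A.biUnion N).card + D := h2
      _ = _ := hcu.symm
      _ ≤ (s'.biUnion t).card := Finset.card_le_card hsub
  obtain ⟨f, hfinj, hft⟩ := (Finset.all_card_le_biUnion_card_iff_exists_injective t).mp hall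
  -- extract the matching
  set P : Finset {x // x ∈ S} := Finset.univ.filter (fun x => (f x).isLeft) with hP
  set Q : Finset {x // x ∈ S} := Finset.univ.filter (fun x => ¬ (f x).isLeft) with hQ
  have hPQ : P.card + Q.card = S.card := by
    rw [hP, hQ, Finset.card_filter_add_card_filter_not]
    exact Fintype.card_coe S
  have hQD : Q.card ≤ D := by
    have h1 : Q.card = (Q.image f).card :=
      (Finset.card_image_of_injective _ hfinj).symm
    have h2 : Q.image f ⊆ (Finset.univ : Finset (Fin D)).image Sum.inr := by
      intro z hz
      simp only [Finset.mem_image] at hz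
      obtain ⟨x, hx, rfl⟩ := hz
      simp only [hQ, Finset.mem_filter] at hx
      rcases hfx : f x with y | b
      · rw [hfx] at hx; simp at hx
      · exact Finset.mem_image_of_mem _ (Finset.mem_univ b)
    calc Q.card = (Q.image f).card := h1
      _ ≤ _ := Finset.card_le_card h2
      _ = D := by rw [Finset.card_image_of_injective _ Sum.inr_injective]; simp
  set S' : Finset (Vtx d) := P.image Subtype.val with hS'
  have hS'card : S'.card = P.card := Finset.card_image_of_injective _ Subtype.val_injective
  have hS'sub : S' ⊆ S := by
    intro a ha
    simp only [hS', Finset.mem_image] at ha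
    obtain ⟨⟨a, haS⟩, _, rfl⟩ := ha
    exact haS
  -- the matching function
  set φ : Vtx d → Vtx d := fun x =>
    if hx : x ∈ S then Sum.elim id (fun _ => x) (f ⟨x, hx⟩) else x with hφ
  have key : ∀ x (hxS' : x ∈ S'), ∃ hx : x ∈ S, f ⟨x, hx⟩ = Sum.inl (φ x) ∧ φ x ∈ N x := by
    intro x hxS'
    simp only [hS', Finset.mem_image] at hxS'
    obtain ⟨⟨a, haS⟩, haP, rfl⟩ := hxS'
    refine ⟨haS, ?_⟩
    simp only [hP, Finset.mem_filter] at haP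
    rcases hfx : f ⟨a, haS⟩ with y | b
    · have hφa : φ a = y := by simp [hφ, haS, hfx]
      refine ⟨congrArg Sum.inl hφa.symm, ?_⟩
      have := hft ⟨a, haS⟩
      rw [hfx] at this
      simp only [ht, Finset.mem_union, Finset.mem_image] at this
      rcases this with ⟨y', hy', h⟩ | ⟨b, _, h⟩
      · obtain rfl : y' = y := Sum.inl_injective h
        rw [hφa]; exact hy'
      · exact absurd h (Sum.inr_ne_inl)
    · rw [hfx] at haP; simp at haP
  refine ⟨(S \ A₀) ∪ A₀.biUnion N, S'.card, ?_, ?_, ?_⟩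
  · -- HasCert S S'.card
    refine ⟨S', S'.image φ, φ, hS'sub, ?_, rfl, ⟨?_, ?_, ?_⟩, ?_⟩
    · intro y hy
      simp only [Finset.mem_image] at hy
      obtain ⟨x, hx, rfl⟩ := hy
      obtain ⟨hxS, _, hφN⟩ := key x hx
      simp only [hN, Finset.mem_filter] at hφN
      exact hφN.2.1
    · intro x hx
      exact Finset.mem_coe.mpr (Finset.mem_image_of_mem _ (Finset.mem_coe.mp hx))
    · intro x₁ hx₁ x₂ hx₂ heq
      obtain ⟨h1, hf1, _⟩ := key x₁ (Finset.mem_coe.mp hx₁)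
      obtain ⟨h2, hf2, _⟩ := key x₂ (Finset.mem_coe.mp hx₂)
      have : f ⟨x₁, h1⟩ = f ⟨x₂, h2⟩ := by rw [hf1, hf2, heq]
      exact congrArg Subtype.val (hfinj this)
    · intro y hy
      simp only [Finset.coe_image, Set.mem_image] at hy ⊢
      exact hy
    · intro x hx
      obtain ⟨hxS, _, hφN⟩ := key x hx
      simp only [hN, Finset.mem_filter] at hφN
      exact hφN.2.2
  · -- cover card bound
    have h1 : (S \ A₀).card = S.card - A₀.card := Finset.card_sdiff_of_subset hA₀S
    have h2 : A₀.card ≤ S.card := Finset.card_le_card hA₀S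
    have h3 : ((S \ A₀) ∪ A₀.biUnion N).card ≤ (S \ A₀).card + (A₀.biUnion N).card :=
      Finset.card_union_le _ _
    have h4 : defic A₀ = A₀.card - (A₀.biUnion N).card := rfl
    have h5 : S'.card = P.card := hS'card
    omega
  · -- cover property
    intro x hxS y hyS hxy
    by_cases hxA : x ∈ A₀
    · right
      exact Finset.mem_union_right _ (Finset.mem_biUnion.mpr
        ⟨x, hxA, by simp only [hN, Finset.mem_filter]; exact ⟨Finset.mem_univ _, hyS, hxy⟩⟩)
    · left
      exact Finset.mem_union_left _ (Finset.mem_sdiff.mpr ⟨hxS, hxA⟩)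

/-- The directed volume of `S` equals `2^d` times the distance of the indicator of `S`
to monotonicity: if `n` is the maximum size of a certificate, and `ε` is the minimum
(normalized) distance from `indic S` to a monotone function, then `n = ε · 2^d`. -/
theorem dirVol_eq_distance_to_monotonicity (d : ℕ) (S : Finset (Vtx d)) (n : ℕ)
    (hcert : HasCert S n) (hmax : ∀ m : ℕ, HasCert S m → m ≤ n)
    (ε : ℚ)
    (hatt : ∃ g : Vtx d → Bool, MonotoneB g ∧
      ((Finset.univ.filter (fun x => indic S x ≠ g x)).card : ℚ) / 2 ^ d = ε)
    (hmin : ∀ g : Vtx d → Bool, MonotoneB g →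
      ε ≤ ((Finset.univ.filter (fun x => indic S x ≠ g x)).card : ℚ) / 2 ^ d) :
    (n : ℚ) = ε * 2 ^ d := by
  have h2d : (0:ℚ) < 2 ^ d := by positivity
  -- Direction 1 : n ≤ ε * 2^d
  obtain ⟨g, hgmono, hgeq⟩ := hatt
  set E : Finset (Vtx d) := Finset.univ.filter (fun x => indic S x ≠ g x) with hE
  obtain ⟨S', T', φ, hS'S, hT'S, hcard, ⟨hbij, hord⟩⟩ := hcert
  have hnE : n ≤ E.card := by
    rw [← hcard]
    apply Finset.card_le_card_of_injOn (fun s => if s ∈ E then s else φ s)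
    · intro s hs
      by_cases hsE : s ∈ E
      · simpa [hsE] using hsE
      · simp only [hsE, if_false]
        have hsS : s ∈ S := hS'S hs
        have hindic : indic S s = true := by simp [indic, hsS]
        have hgs : g s = true := by
          by_contra h
          exact hsE (by simp only [hE, Finset.mem_filter]; exact ⟨Finset.mem_univ _,
            by rw [hindic]; exact fun heq => h heq.symm⟩)
        have hφs : g (φ s) = true := hgmono s (φ s) (hord s hs).1 hgs
        have hφS : φ s ∉ S := hT'S _ (hbij.1 (Finset.mem_coe.mpr hs))
        refine Finset.mem_filter.mpr ?_
        refine ⟨Finset.mem_univ _, ?_⟩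
        rw [hφs]; simp [indic, hφS]
    · intro s₁ hs₁ s₂ hs₂ heq
      simp only at heq
      by_cases h1 : s₁ ∈ E <;> by_cases h2 : s₂ ∈ E <;> simp only [h1, h2, if_true, if_false] at heq
      · exact heq
      · exact absurd heq (fun h => (hT'S _ (hbij.1 (Finset.mem_coe.mpr hs₂)))
          (h ▸ hS'S hs₁))
      · exact absurd heq.symm (fun h => (hT'S _ (hbij.1 (Finset.mem_coe.mpr hs₁)))
          (h ▸ hS'S hs₂))
      · exact hbij.2.1 (Finset.mem_coe.mpr hs₁) (Finset.mem_coe.mpr hs₂) heq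
  have hdir1 : (n : ℚ) ≤ ε * 2 ^ d := by
    have : (n : ℚ) ≤ (E.card : ℚ) := by exact_mod_cast hnE
    calc (n:ℚ) ≤ (E.card : ℚ) := this
      _ = ε * 2 ^ d := by
        rw [← hgeq]; field_simp
  -- Direction 2 : ε * 2^d ≤ n
  obtain ⟨C, m, hcm, hCm, hcover⟩ := exists_cover d S
  have hmn : m ≤ n := hmax m hcm
  set g' : Vtx d → Bool := fun x => decide (∃ z ∈ S, z ∉ C ∧ hle z x) with hg'
  have hg'mono : MonotoneB g' := by
    intro x y hxy hx
    simp only [hg', decide_eq_true_eq] at hx ⊢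
    obtain ⟨z, hz1, hz2, hz3⟩ := hx
    exact ⟨z, hz1, hz2, fun i hi => hxy i (hz3 i hi)⟩
  have hsubC : Finset.univ.filter (fun x => indic S x ≠ g' x) ⊆ C := by
    intro x hx
    simp only [Finset.mem_filter] at hx
    by_contra hxC
    apply hx.2
    by_cases hxS : x ∈ S
    · have : g' x = true := by
        simp only [hg', decide_eq_true_eq]
        exact ⟨x, hxS, hxC, fun i hi => hi⟩
      rw [this]; simp [indic, hxS]
    · have : g' x = false := by
        simp only [hg', decide_eq_false_iff_not]
        rintro ⟨z, hz1, hz2, hz3⟩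
        have hzx : z ≠ x := fun h => hxS (h ▸ hz1)
        rcases hcover z hz1 x hxS ⟨hz3, hzx⟩ with h | h
        · exact hz2 h
        · exact hxC h
      rw [this]; simp [indic, hxS]
  have hdir2 : ε * 2 ^ d ≤ (n : ℚ) := by
    have h1 := hmin g' hg'mono
    have h2 : ((Finset.univ.filter (fun x => indic S x ≠ g' x)).card : ℚ) ≤ (n : ℚ) := by
      have := Finset.card_le_card hsubC
      have : (Finset.univ.filter (fun x => indic S x ≠ g' x)).card ≤ n :=
        le_trans this (le_trans hCm hmn)
      exact_mod_cast this
    have h3 := (le_div_iff₀ h2d).mp h1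
    linarith
  linarith
end

section
/- Let $G$ be a finite directed graph with distinguished source $s$ and sink $t$, unit capacities on a set of 'internal' edges, and suppose there is an integral maximum flow of value $F$ and a minimum cut consisting of a vertex set $C$ (each of cut-cost 2, i.e., vertex capacity 2) and an edge set $F_E$ (each of cut-cost 1) with $2|C| + |F_E| = F$. Then any path decomposition $\mathcal{P}$ of an integral maximum flow satisfies: every path in $\mathcal{P}$ contains exactly one element of $C \cup F_E$ (exactly one cut vertex or exactly one cut edge, not both), every vertex of $C$ lies on exactly two paths of $\mathcal{P}$, and every edge of $F_E$ lies on exactly one path of $\mathcal{P}$. -/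
open scoped Classical

lemma edgesL_fst_mem {α : Type*} {p : List α} {e : α × α} (h : e ∈ edgesL p) : e.1 ∈ p := by
  obtain ⟨a, b⟩ := e
  exact (List.of_mem_zip h).1

lemma edgesL_nodup {α : Type*} : ∀ {p : List α}, p.Nodup → (edgesL p).Nodup
  | [], _ => by simp [edgesL]
  | [a], _ => by simp [edgesL]
  | (a::b::r), h => by
    have h1 := (List.nodup_cons.mp h).1
    have h2 := (List.nodup_cons.mp h).2
    show ((a,b) :: edgesL (b::r)).Nodup
    refine List.nodup_cons.mpr ⟨?_, edgesL_nodup h2⟩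
    intro hmem
    exact h1 (edgesL_fst_mem hmem)

lemma countP_nodup_eq_sum {β : Type*} [DecidableEq β] :
    ∀ (l : List β), l.Nodup → ∀ (S : Finset β),
      l.countP (fun x => decide (x ∈ S)) = ∑ x ∈ S, if x ∈ l then 1 else 0
  | [], _, S => by simp
  | (a::l), h, S => by
    have h1 := (List.nodup_cons.mp h).1
    have h2 := (List.nodup_cons.mp h).2
    rw [List.countP_cons, countP_nodup_eq_sum l h2 S]
    have : ∀ x ∈ S, (if x ∈ a::l then 1 else 0) =
        (if x ∈ l then 1 else 0) + (if x = a then 1 else 0) := by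
      intro x _
      by_cases hx : x = a
      · subst hx; simp [h1]
      · simp [hx]
    rw [Finset.sum_congr rfl this, Finset.sum_add_distrib]
    simp [Finset.sum_ite_eq']

lemma sum_map_sum_swap {β γ : Type*} (P : Multiset β) (S : Finset γ) (f : γ → β → ℕ) :
    (P.map (fun p => ∑ x ∈ S, f x p)).sum = ∑ x ∈ S, (P.map (f x)).sum := by
  induction P using Multiset.induction_on with
  | empty => simp
  | cons a P ih => simp [ih, Finset.sum_add_distrib]

lemma sum_map_ite_eq_countP {β : Type*} (P : Multiset β) (q : β → Prop) [DecidablePred q] :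
    (P.map (fun b => if q b then 1 else 0)).sum = P.countP q := by
  induction P using Multiset.induction_on with
  | empty => simp
  | cons a P ih => by_cases h : q a <;> simp [Multiset.countP_cons, ih, h, Nat.add_comm]

lemma card_le_sum_map {β : Type*} (M : Multiset β) (f : β → ℕ) (h : ∀ x ∈ M, 1 ≤ f x) :
    Multiset.card M ≤ (M.map f).sum := by
  induction M using Multiset.induction_on with
  | empty => simp
  | cons a M ih =>
    simp only [Multiset.map_cons, Multiset.sum_cons, Multiset.card_cons]
    have := h a (Multiset.mem_cons_self a M)
    have := ih (fun x hx => h x (Multiset.mem_cons_of_mem hx))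
    omega

lemma eq_one_of_sum_eq_card {β : Type*} (M : Multiset β) (f : β → ℕ)
    (h1 : ∀ x ∈ M, 1 ≤ f x) (h2 : (M.map f).sum = Multiset.card M) :
    ∀ x ∈ M, f x = 1 := by
  intro x hx
  by_contra hne
  have hfx : 2 ≤ f x := by have := h1 x hx; omega
  have hM : M = x ::ₘ M.erase x := (Multiset.cons_erase hx).symm
  have hle : Multiset.card (M.erase x) ≤ ((M.erase x).map f).sum :=
    card_le_sum_map _ f (fun y hy => h1 y (Multiset.mem_of_mem_erase hy))
  rw [hM] at h2
  simp only [Multiset.map_cons, Multiset.sum_cons, Multiset.card_cons] at h2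
  omega

lemma list_countP_le_one {α : Type*} [DecidableEq α] (e : α × α) :
    ∀ (l : List (List α)), l.Pairwise (fun p q => ∀ e ∈ edgesL p, e ∉ edgesL q) →
      l.countP (fun p => decide (e ∈ edgesL p)) ≤ 1
  | [], _ => by simp
  | (a::l), h => by
    have hhead := (List.pairwise_cons.mp h).1
    have htail := (List.pairwise_cons.mp h).2
    rw [List.countP_cons]
    by_cases he : e ∈ edgesL a
    · have : l.countP (fun p => decide (e ∈ edgesL p)) = 0 := by
        rw [List.countP_eq_zero]
        intro q hq
        simpa using hhead q hq e he
      simp [this, he]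
    · have := list_countP_le_one e l htail
      simp [he]; omega

lemma multiset_countP_le_one {α : Type*} [DecidableEq α] (e : α × α) (P : Multiset (List α))
    (h : P.Pairwise (fun p q => ∀ e ∈ edgesL p, e ∉ edgesL q)) :
    P.countP (fun p => e ∈ edgesL p) ≤ 1 := by
  obtain ⟨l, rfl, hl⟩ := h
  rw [Multiset.coe_countP]
  exact list_countP_le_one e l hl

/-- **Complementary slackness for mixed vertex/edge cuts.** In a finite directed graph with
source `s`, sink `t`, unit capacities on internal edges and capacity `2` on internal vertices:
if `(C, FE)` is a valid cut of cost `2|C| + |FE|` equal to the value `|𝒫|` of an integral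
maximum flow decomposed into a multiset `𝒫` of (simple) `s`-`t` paths that are pairwise
edge-disjoint with every internal vertex on at most two paths, then every path of `𝒫`
contains exactly one cut element, every vertex of `C` lies on exactly two paths, and every
edge of `FE` lies on exactly one path. -/
theorem complementary_slackness {α : Type*} [Fintype α] [DecidableEq α]
    (G : α → α → Prop) (s t : α)
    (C : Finset α) (FE : Finset (α × α))
    (hCint : ∀ v ∈ C, v ≠ s ∧ v ≠ t)
    (hFEedges : ∀ e ∈ FE, G e.1 e.2)
    (hcut : ∀ p : List α, p.Chain' G → p.head? = some s → p.getLast? = some t →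
      (∃ v ∈ C, v ∈ p) ∨ (∃ e ∈ FE, e ∈ edgesL p))
    (P : Multiset (List α))
    (hpaths : ∀ p ∈ P, p.Chain' G ∧ p.Nodup ∧ p.head? = some s ∧ p.getLast? = some t)
    (hedisj : P.Pairwise (fun p q => ∀ e ∈ edgesL p, e ∉ edgesL q))
    (hvtx : ∀ v : α, v ≠ s → v ≠ t → (P.countP (fun p => v ∈ p)) ≤ 2)
    (hval : Multiset.card P = 2 * C.card + FE.card) :
    (∀ p ∈ P, (p.countP (fun v => decide (v ∈ C))) +
        ((edgesL p).countP (fun e => decide (e ∈ FE))) = 1) ∧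
    (∀ v ∈ C, (P.countP (fun p => v ∈ p)) = 2) ∧
    (∀ e ∈ FE, (P.countP (fun p => e ∈ edgesL p)) = 1) := by
  classical
  set wv : List α → ℕ := fun p => p.countP (fun v => decide (v ∈ C)) with hwv
  set we : List α → ℕ := fun p => (edgesL p).countP (fun e => decide (e ∈ FE)) with hwe
  -- column sums
  have hA : (P.map wv).sum = ∑ v ∈ C, P.countP (fun p => v ∈ p) := by
    have h1 : P.map wv = P.map (fun p => ∑ v ∈ C, if v ∈ p then 1 else 0) :=
      Multiset.map_congr rfl (fun p hp => countP_nodup_eq_sum p (hpaths p hp).2.1 C)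
    rw [h1, sum_map_sum_swap]
    exact Finset.sum_congr rfl fun v _ => sum_map_ite_eq_countP P (fun p => v ∈ p)
  have hB : (P.map we).sum = ∑ e ∈ FE, P.countP (fun p => e ∈ edgesL p) := by
    have h1 : P.map we = P.map (fun p => ∑ e ∈ FE, if e ∈ edgesL p then 1 else 0) :=
      Multiset.map_congr rfl (fun p hp => by
        have h2 := countP_nodup_eq_sum (edgesL p) (edgesL_nodup (hpaths p hp).2.1) FE
        convert h2 using 2
        congr)
    rw [h1, sum_map_sum_swap]
    exact Finset.sum_congr rfl fun e _ => sum_map_ite_eq_countP P (fun p => e ∈ edgesL p)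
  -- upper bounds on column sums
  have hvle : ∀ v ∈ C, P.countP (fun p => v ∈ p) ≤ 2 :=
    fun v hv => hvtx v (hCint v hv).1 (hCint v hv).2
  have hele : ∀ e ∈ FE, P.countP (fun p => e ∈ edgesL p) ≤ 1 :=
    fun e _ => multiset_countP_le_one e P hedisj
  have hAle : ∑ v ∈ C, P.countP (fun p => v ∈ p) ≤ 2 * C.card := by
    calc ∑ v ∈ C, P.countP (fun p => v ∈ p) ≤ ∑ _v ∈ C, 2 := Finset.sum_le_sum hvle
    _ = 2 * C.card := by simp [Finset.sum_const, Nat.mul_comm]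
  have hBle : ∑ e ∈ FE, P.countP (fun p => e ∈ edgesL p) ≤ FE.card := by
    calc ∑ e ∈ FE, P.countP (fun p => e ∈ edgesL p) ≤ ∑ _e ∈ FE, 1 := Finset.sum_le_sum hele
    _ = FE.card := by simp
  -- total split
  have hsplit : (P.map (fun p => wv p + we p)).sum = (P.map wv).sum + (P.map we).sum :=
    Multiset.sum_map_add
  -- each row contributes at least one
  have hge1 : ∀ p ∈ P, 1 ≤ wv p + we p := by
    intro p hp
    obtain ⟨hch, hnd, hh, hl⟩ := hpaths p hp
    rcases hcut p hch hh hl with ⟨v, hvC, hvp⟩ | ⟨e, heFE, hep⟩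
    · have : 0 < wv p := List.countP_pos_iff.mpr ⟨v, hvp, by simpa⟩
      omega
    · have : 0 < we p := List.countP_pos_iff.mpr ⟨e, hep, by simpa⟩
      omega
  have hlow : Multiset.card P ≤ (P.map (fun p => wv p + we p)).sum :=
    card_le_sum_map P _ hge1
  -- squeeze
  have hTeq : (P.map (fun p => wv p + we p)).sum = Multiset.card P := by omega
  have hAeq : ∑ v ∈ C, P.countP (fun p => v ∈ p) = 2 * C.card := by omega
  have hBeq : ∑ e ∈ FE, P.countP (fun p => e ∈ edgesL p) = FE.card := by omega
  refine ⟨eq_one_of_sum_eq_card P _ hge1 hTeq, ?_, ?_⟩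
  · intro v hv
    by_contra hne
    have hlt : P.countP (fun p => v ∈ p) < 2 := lt_of_le_of_ne (hvle v hv) hne
    have : ∑ v ∈ C, P.countP (fun p => v ∈ p) < ∑ _v ∈ C, 2 :=
      Finset.sum_lt_sum hvle ⟨v, hv, hlt⟩
    simp only [Finset.sum_const, smul_eq_mul] at this
    omega
  · intro e he
    by_contra hne
    have hlt : P.countP (fun p => e ∈ edgesL p) < 1 := lt_of_le_of_ne (hele e he) hne
    have : ∑ e ∈ FE, P.countP (fun p => e ∈ edgesL p) < ∑ _e ∈ FE, 1 :=
      Finset.sum_lt_sum hele ⟨e, he, hlt⟩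
    simp only [Finset.sum_const, smul_eq_mul, Nat.mul_one] at this
    omega
end

section
/- Suppose the following routing statement holds for parameter $r \ge 1$: for every $S \subseteq \{0,1\}^d$ with separation distance $r$, the directed hypercube flow network with unit edge capacities and vertex capacities $r^2$ admits a flow of value at least $C \cdot r \cdot \mathrm{vol}^+(S)$ from $S$ to $\overline{S}$ (for an absolute constant $C > 0$). Then for every Boolean function $f:\{0,1\}^d \to \{0,1\}$ and every bicoloring $\chi$ of the hypercube edges with colors $\{0,1\}$, one has $2^{-d} \sum_{x} \sqrt{\mathrm{Inf}^{+,\chi}_f(x)} \ge (C/2)\, \varepsilon_f$, where $\mathrm{Inf}^{+,\chi}_f(x)$ is the number of violated edges incident to $x$ whose color equals $f(x)$. -/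
open scoped Classical

/-- `(S',T';φ)` is a directed-volume certificate-candidate of `S` of size `m`. -/
def CertOf {d : ℕ} (S S' T' : Finset (Vtx d)) (φ : Vtx d → Vtx d) (m : ℕ) : Prop :=
  S' ⊆ S ∧ (∀ t ∈ T', t ∉ S) ∧ S'.card = m ∧ MatchedFrom S' T' φ

/-- `n` is the directed volume `vol⁺(S)`. -/
def VolIs {d : ℕ} (S : Finset (Vtx d)) (n : ℕ) : Prop :=
  (∃ S' T' φ, CertOf S S' T' φ n) ∧
  (∀ (m : ℕ) S' T' φ, CertOf S S' T' φ m → m ≤ n)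

/-- Total weight gap `∑_{s ∈ S'} (‖φ s‖₁ - ‖s‖₁)` of a matched pair. -/
noncomputable def gap {d : ℕ} (S' : Finset (Vtx d)) (φ : Vtx d → Vtx d) : ℝ :=
  ∑ s ∈ S', ((wt (φ s) : ℝ) - (wt s : ℝ))

/-- `r` is the separation distance of `S` (whose directed volume is `n`): the minimum,
over directed-volume certificates, of the average weight gap. -/
def SepIs {d : ℕ} (S : Finset (Vtx d)) (n : ℕ) (r : ℝ) : Prop :=
  (∃ S' T' φ, CertOf S S' T' φ n ∧ gap S' φ = r * n) ∧
  (∀ S' T' φ, CertOf S S' T' φ n → r * n ≤ gap S' φ)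

/-- The number of violated edges of `f` incident to `x` whose `χ`-color equals `f x`. -/
noncomputable def colInf {d : ℕ} (f : Vtx d → Bool) (χ : Vtx d × Vtx d → Bool) (x : Vtx d) : ℕ :=
  (Finset.univ.filter (fun e : Vtx d × Vtx d =>
    IsEdge e.1 e.2 ∧ f e.1 = true ∧ f e.2 = false ∧ (e.1 = x ∨ e.2 = x) ∧ χ e = f x)).card

lemma hlt_wt {d : ℕ} {x y : Vtx d} (h : hlt x y) : wt x < wt y := by
  apply Finset.card_lt_card
  rw [Finset.ssubset_iff_of_subset]
  · by_contra hc
    push_neg at hc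
    apply h.2
    funext i
    by_cases hx : x i = true
    · rw [hx, (h.1 i hx)]
    · by_cases hy : y i = true
      · exact absurd (hc i (Finset.mem_filter.mpr ⟨Finset.mem_univ _, hy⟩)) (by simpa using hx)
      · simp only [Bool.not_eq_true] at hx hy; rw [hx, hy]
  · intro i hi
    simp only [Finset.mem_filter, Finset.mem_univ, true_and] at hi ⊢
    exact h.1 i hi

lemma cert_zero {d : ℕ} (S : Finset (Vtx d)) : CertOf S ∅ ∅ id 0 := by
  refine ⟨Finset.empty_subset _, by simp, by simp, ?_, by simp⟩
  simpa using Set.bijOn_empty (id : Vtx d → Vtx d)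

lemma cert_single {d : ℕ} {S : Finset (Vtx d)} {a b : Vtx d} (ha : a ∈ S) (hb : b ∉ S)
    (hab : hlt a b) : CertOf S {a} {b} (fun _ => b) 1 := by
  refine ⟨by simpa using ha, by simpa using hb, by simp, ?_, ?_⟩
  · refine ⟨by intro x hx; simp, ?_, ?_⟩
    · intro x hx y hy _
      simp only [Finset.coe_singleton, Set.mem_singleton_iff] at hx hy
      rw [hx, hy]
    · intro x hx
      simp only [Finset.coe_singleton, Set.mem_singleton_iff] at hx
      exact ⟨a, by simp, hx.symm⟩
  · intro s hs; simp only [Finset.mem_singleton] at hs; subst hs; exact hab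

lemma cert_extend {d : ℕ} {S S' T' : Finset (Vtx d)} {φ : Vtx d → Vtx d} {n : ℕ}
    (h : CertOf S S' T' φ n) {a b : Vtx d} (ha : a ∈ S) (hb : b ∉ S) (hab : hlt a b)
    (ha' : a ∉ S') (hb' : b ∉ T') :
    CertOf S (insert a S') (insert b T') (Function.update φ a b) (n + 1) := by
  obtain ⟨hSS, hT, hcard, hbij, hlt'⟩ := h
  refine ⟨Finset.insert_subset ha hSS, ?_, ?_, ?_, ?_⟩
  · intro t ht
    rcases Finset.mem_insert.mp ht with h1 | h1
    · subst h1; exact hb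
    · exact hT t h1
  · rw [Finset.card_insert_of_notMem ha', hcard]
  · have hEq : Set.EqOn φ (Function.update φ a b) ↑S' := by
      intro s hs
      have : s ≠ a := by rintro rfl; exact ha' hs
      simp [Function.update_of_ne this]
    have hbij' : Set.BijOn (Function.update φ a b) ↑S' ↑T' := hbij.congr hEq
    have hfa : Function.update φ a b a = b := Function.update_self a b φ
    have := hbij'.insert (a := a) (by rw [hfa]; simpa using hb')
    rw [hfa] at this
    simpa using this
  · intro s hs
    rcases Finset.mem_insert.mp hs with h1 | h1
    · subst h1; simpa [Function.update_self] using hab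
    · have : s ≠ a := by rintro rfl; exact ha' h1
      simpa [Function.update_of_ne this] using hlt' s h1

lemma matched_card {d : ℕ} {A B : Finset (Vtx d)} {φ : Vtx d → Vtx d}
    (h : MatchedFrom A B φ) : B.card = A.card := by
  have himg : A.image φ = B := by
    apply Finset.coe_injective
    rw [Finset.coe_image]
    exact h.1.image_eq
  rw [← himg, Finset.card_image_of_injOn h.1.injOn]

lemma chain'_mem_edgesL {α : Type*} {R : α → α → Prop} :
    ∀ {p : List α}, p.Chain' R → ∀ e ∈ edgesL p, R e.1 e.2 := by
  intro p
  induction p with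
  | nil => simp [edgesL]
  | cons a q ih =>
    cases q with
    | nil => simp [edgesL]
    | cons b q' =>
      intro h e he
      simp only [List.Chain', List.isChain_cons_cons] at h
      simp only [edgesL, List.tail_cons, List.zip_cons_cons, List.mem_cons] at he
      rcases he with rfl | he
      · exact h.1
      · exact ih h.2 e he

lemma mem_of_edgesL {α : Type*} :
    ∀ {p : List α} {e : α × α}, e ∈ edgesL p → e.1 ∈ p ∧ e.2 ∈ p := by
  intro p
  induction p with
  | nil => simp [edgesL]
  | cons a q ih =>
    cases q with
    | nil => simp [edgesL]
    | cons b q' =>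
      intro e he
      simp only [edgesL, List.tail_cons, List.zip_cons_cons, List.mem_cons] at he
      rcases he with rfl | he
      · exact ⟨List.mem_cons_self, List.mem_cons_of_mem _ List.mem_cons_self⟩
      · have := ih (e := e) he
        exact ⟨List.mem_cons_of_mem _ this.1, List.mem_cons_of_mem _ this.2⟩

lemma crossing {d : ℕ} (S : Finset (Vtx d)) :
    ∀ (p : List (Vtx d)) (s t : Vtx d), p.head? = some s → s ∈ S →
      p.getLast? = some t → t ∉ S → ∃ e ∈ edgesL p, e.1 ∈ S ∧ e.2 ∉ S := by
  intro p
  induction p with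
  | nil => simp
  | cons a q ih =>
    intro s t hh hs hl ht
    simp only [List.head?_cons, Option.some_inj] at hh
    subst hh
    cases q with
    | nil =>
      simp only [List.getLast?_singleton, Option.some_inj] at hl
      subst hl; exact absurd hs ht
    | cons b q' =>
      rw [List.getLast?_cons_cons] at hl
      by_cases hb : b ∈ S
      · obtain ⟨e, he, h1, h2⟩ := ih b t (by simp) hb hl ht
        refine ⟨e, ?_, h1, h2⟩
        simp only [edgesL, List.tail_cons, List.zip_cons_cons, List.mem_cons]
        exact Or.inr he
      · exact ⟨(a, b), by simp [edgesL, List.zip_cons_cons], hs, hb⟩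

/-- **The routing conjecture implies the robust directed Talagrand inequality (KMS).**
If for every `S` of separation distance `r ≥ 1` the hypercube flow network with unit edge
capacities and vertex capacities `r²` carries at least `C·r·vol⁺(S)` units of flow from `S`
to its complement (formulated via a path decomposition), then for every `f` and every edge
bicoloring `χ`, `2^{-d} ∑_x √(Inf⁺χ_f(x)) ≥ (C/2)·ε_f`. -/
theorem routing_conjecture_implies_robust_talagrand (d : ℕ) (C : ℝ) (hC : 0 < C)
    (hrout : ∀ (S : Finset (Vtx d)) (n : ℕ) (r : ℝ), 1 ≤ r →
      VolIs S n → SepIs S n r →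
      ∃ P : Multiset (List (Vtx d)),
        (∀ p ∈ P, p.Chain' IsEdge ∧
          (∃ s ∈ S, p.head? = some s) ∧ (∃ t, p.getLast? = some t ∧ t ∉ S)) ∧
        P.Pairwise (fun p q => ∀ e ∈ edgesL p, e ∉ edgesL q) ∧
        (∀ v : Vtx d, ((P.countP (fun p => v ∈ p) : ℕ) : ℝ) ≤ r ^ 2) ∧
        C * r * n ≤ (Multiset.card P : ℝ)) :
    ∀ (f : Vtx d → Bool) (χ : Vtx d × Vtx d → Bool) (ε : ℝ),
      (∃ g : Vtx d → Bool, MonotoneB g ∧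
        ((Finset.univ.filter (fun x => f x ≠ g x)).card : ℝ) / 2 ^ d = ε) →
      (∀ g : Vtx d → Bool, MonotoneB g →
        ε ≤ ((Finset.univ.filter (fun x => f x ≠ g x)).card : ℝ) / 2 ^ d) →
      ((2 : ℝ) ^ d)⁻¹ * ∑ x : Vtx d, Real.sqrt (colInf f χ x) ≥ (C / 2) * ε := by
  intro f χ ε hex hmin
  have hLHS0 : (0:ℝ) ≤ ((2:ℝ)^d)⁻¹ * ∑ x : Vtx d, Real.sqrt (colInf f χ x) :=
    mul_nonneg (inv_nonneg.mpr (by positivity)) (Finset.sum_nonneg fun x _ => Real.sqrt_nonneg _)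
  set S : Finset (Vtx d) := Finset.univ.filter (fun x => f x = true) with hSdef
  have hmemS : ∀ x, x ∈ S ↔ f x = true := by intro x; simp [hSdef]
  set Pr : ℕ → Prop := fun m => ∃ S' T' φ, CertOf S S' T' φ m with hPr
  have hbdd : ∀ m, Pr m → m ≤ Fintype.card (Vtx d) := by
    intro m hm
    rw [hPr] at hm
    obtain ⟨S', T', φ, hsub, _, hcard, _⟩ := hm
    rw [← hcard]
    exact le_trans (Finset.card_le_card (Finset.subset_univ S')) (le_of_eq (Finset.card_univ))
  set n := Nat.findGreatest Pr (Fintype.card (Vtx d)) with hn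
  have hvol : VolIs S n := by
    constructor
    · refine Nat.findGreatest_spec (Nat.zero_le _) (show Pr 0 from ?_)
      rw [hPr]
      exact ⟨∅, ∅, id, cert_zero S⟩
    · intro m S' T' φ hc
      have hPm : Pr m := by rw [hPr]; exact ⟨S', T', φ, hc⟩
      exact Nat.le_findGreatest (hbdd m hPm) hPm
  by_cases hn0 : n = 0
  · have hmono : MonotoneB f := by
      intro x y hxy hfx
      by_contra hfy
      have hxny : x ≠ y := fun h => hfy (h ▸ hfx)
      have h1 := hvol.2 1 {x} {y} (fun _ => y)
        (cert_single ((hmemS x).mpr hfx) (fun h => hfy ((hmemS y).mp h)) ⟨hxy, hxny⟩)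
      omega
    have hε0 : ε ≤ 0 := by
      have := hmin f hmono
      simpa using this
    have : (C/2) * ε ≤ 0 := mul_nonpos_of_nonneg_of_nonpos (le_of_lt (half_pos hC)) hε0
    exact le_trans this hLHS0
  · -- main case: n ≥ 1
    have hn1 : 1 ≤ n := Nat.one_le_iff_ne_zero.mpr hn0
    have hnR : (0:ℝ) < n := by exact_mod_cast hn1
    -- separation distance
    obtain ⟨CT, hCT⟩ : ∃ CT : Finset (Finset (Vtx d) × Finset (Vtx d) × (Vtx d → Vtx d)),
        CT = Finset.univ.filter (fun c => CertOf S c.1 c.2.1 c.2.2 n) := ⟨_, rfl⟩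
    have hmemCT : ∀ c : Finset (Vtx d) × Finset (Vtx d) × (Vtx d → Vtx d),
        c ∈ CT ↔ CertOf S c.1 c.2.1 c.2.2 n := by
      intro c
      rw [hCT]
      simp only [Finset.mem_filter, Finset.mem_univ, true_and]
    have hCTne : CT.Nonempty := by
      obtain ⟨S', T', φ, hc⟩ := hvol.1
      exact ⟨(S', T', φ), (hmemCT _).mpr hc⟩
    obtain ⟨c0, hc0mem, hc0min⟩ := Finset.exists_min_image CT (fun c => gap c.1 c.2.2) hCTne
    have hc0 : CertOf S c0.1 c0.2.1 c0.2.2 n := (hmemCT _).mp hc0mem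
    obtain ⟨r, hrdef⟩ : ∃ r : ℝ, r = gap c0.1 c0.2.2 / n := ⟨_, rfl⟩
    have hrn : r * n = gap c0.1 c0.2.2 := by
      rw [hrdef]
      exact div_mul_cancel₀ _ (ne_of_gt hnR)
    have hsepmin : ∀ S' T' φ, CertOf S S' T' φ n → r * n ≤ gap S' φ := by
      intro S' T' φ hc
      rw [hrn]
      exact hc0min (S', T', φ) ((hmemCT _).mpr hc)
    have hsep : SepIs S n r :=
      ⟨⟨c0.1, c0.2.1, c0.2.2, hc0, hrn.symm⟩, hsepmin⟩
    have hgapn : ∀ S' T' φ, CertOf S S' T' φ n → (n:ℝ) ≤ gap S' φ := by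
      rintro S' T' φ ⟨_, _, hcard, _, hl⟩
      calc (n:ℝ) = ∑ _s ∈ S', (1:ℝ) := by rw [Finset.sum_const, hcard]; simp
        _ ≤ gap S' φ := by
          refine Finset.sum_le_sum (fun s hs => ?_)
          have h1 : wt s + 1 ≤ wt (φ s) := hlt_wt (hl s hs)
          have h2 : (wt s:ℝ) + 1 ≤ (wt (φ s):ℝ) := by exact_mod_cast h1
          linarith
    have hr1 : (1:ℝ) ≤ r := by
      rw [hrdef, le_div_iff₀ hnR, one_mul]
      exact hgapn _ _ _ hc0
    have hr0 : (0:ℝ) ≤ r := le_trans zero_le_one hr1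
    obtain ⟨P, hPprop, hPpair, hPcap, hPcard⟩ := hrout S n r hr1 hvol hsep
    obtain ⟨l, hPl, hlpair⟩ := hPpair
    -- choice of a crossing violated edge on each path
    set Q : List (Vtx d) → Prop :=
      fun p => ∃ e, e ∈ edgesL p ∧ IsEdge e.1 e.2 ∧ f e.1 = true ∧ f e.2 = false with hQ
    set E : List (Vtx d) → Vtx d × Vtx d :=
      fun p => if h : Q p then h.choose else ((fun _ => false), (fun _ => false)) with hE
    have hEspec : ∀ p ∈ l, E p ∈ edgesL p ∧ IsEdge (E p).1 (E p).2 ∧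
        f (E p).1 = true ∧ f (E p).2 = false := by
      intro p hp
      have hpP : p ∈ P := by rw [hPl]; exact_mod_cast hp
      obtain ⟨hchain, ⟨s, hsS, hshead⟩, ⟨t, htlast, htS⟩⟩ := hPprop p hpP
      obtain ⟨e, he, h1, h2⟩ := crossing S p s t hshead hsS htlast htS
      have hf2 : f e.2 = false := by
        have : f e.2 ≠ true := fun h => h2 ((hmemS _).mpr h)
        exact Bool.eq_false_iff.mpr this
      have hQp : Q p := by
        rw [hQ]
        exact ⟨e, he, chain'_mem_edgesL hchain e he, (hmemS _).mp h1, hf2⟩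
      have hEp : E p = hQp.choose := by rw [hE]; simp only [dif_pos hQp]
      rw [hEp]
      exact hQp.choose_spec
    set v : Vtx d × Vtx d → Vtx d := fun e => if χ e = true then e.1 else e.2 with hv
    have hvend : ∀ e : Vtx d × Vtx d, v e = e.1 ∨ v e = e.2 := by
      intro e
      rw [hv]
      by_cases hχ : χ e = true
      · exact Or.inl (by simp [hχ])
      · exact Or.inr (by simp [hχ])
    -- nodup of chosen edges
    have hpair' : l.Pairwise (fun p q => E p ≠ E q) := by
      refine hlpair.imp_of_mem ?_
      intro p q hp hq hR hEq
      exact hR _ (hEspec p hp).1 (hEq ▸ (hEspec q hq).1)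
    have hnodup : (l.map E).Nodup := List.Pairwise.map E (fun a b h => h) hpair'
    set L : List (Vtx d) := l.map (fun p => v (E p)) with hL
    have hLE : L = (l.map E).map v := by rw [hL, List.map_map]; rfl
    -- per-vertex bounds
    have hbound1 : ∀ x : Vtx d, L.count x ≤ colInf f χ x := by
      intro x
      set K : List (Vtx d × Vtx d) := (l.map E).filter (fun e => v e == x) with hK
      have e1 : L.count x = K.length := by
        rw [List.count_eq_countP, hLE, List.countP_map, hK, List.countP_eq_length_filter]
        rfl
      have e2 : K.Nodup := (List.filter_sublist).nodup hnodup
      have e3 : K.toFinset ⊆ Finset.univ.filter (fun e : Vtx d × Vtx d =>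
          IsEdge e.1 e.2 ∧ f e.1 = true ∧ f e.2 = false ∧ (e.1 = x ∨ e.2 = x) ∧ χ e = f x) := by
        intro e he
        rw [List.mem_toFinset, hK, List.mem_filter] at he
        obtain ⟨hel, hvx⟩ := he
        rw [beq_iff_eq] at hvx
        obtain ⟨p, hp, rfl⟩ := List.mem_map.mp hel
        obtain ⟨_, hIsE, hf1, hf2⟩ := hEspec p hp
        refine Finset.mem_filter.mpr ⟨Finset.mem_univ _, hIsE, hf1, hf2, ?_, ?_⟩
        · rcases hvend (E p) with h | h
          · exact Or.inl (by rw [← hvx, h])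
          · exact Or.inr (by rw [← hvx, h])
        · by_cases hχ : χ (E p) = true
          · have : v (E p) = (E p).1 := by rw [hv]; simp [hχ]
            rw [← hvx, this, hf1, hχ]
          · have hχ' : χ (E p) = false := Bool.eq_false_iff.mpr hχ
            have : v (E p) = (E p).2 := by rw [hv]; simp [hχ']
            rw [← hvx, this, hf2, hχ']
      calc L.count x = K.length := e1
        _ = K.toFinset.card := (List.toFinset_card_of_nodup e2).symm
        _ ≤ _ := Finset.card_le_card e3
    have hbound2 : ∀ x : Vtx d, (L.count x : ℝ) ≤ r ^ 2 := by
      intro x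
      refine le_trans ?_ (hPcap x)
      have hcount : L.count x ≤ l.countP (fun p => decide (x ∈ p)) := by
        rw [List.count_eq_countP, hL, List.countP_map]
        refine List.countP_mono_left ?_
        intro p hp hpx
        simp only [Function.comp_apply, beq_iff_eq] at hpx
        rw [decide_eq_true_eq]
        have hmem := mem_of_edgesL (hEspec p hp).1
        rw [← hpx]
        rcases hvend (E p) with h | h
        · rw [h]; exact hmem.1
        · rw [h]; exact hmem.2
      have hPc : (P.countP (fun p => x ∈ p)) = l.countP (fun p => decide (x ∈ p)) := by
        rw [hPl, Multiset.coe_countP]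
      exact_mod_cast hPc ▸ hcount
    -- sum of counts equals length
    have hsumcnt : ∑ x : Vtx d, (L.count x : ℝ) = (l.length : ℝ) := by
      have h1 : ∑ x : Vtx d, (↑L : Multiset (Vtx d)).count x
          = Multiset.card (↑L : Multiset (Vtx d)) := by
        rw [← Multiset.toFinset_sum_count_eq (↑L : Multiset (Vtx d))]
        refine (Finset.sum_subset (Finset.subset_univ _) ?_).symm
        intro x _ hx
        exact Multiset.count_eq_zero.mpr (by simpa using hx)
      have h2 : ∑ x : Vtx d, L.count x = L.length := by
        simpa using h1
      have h3 : L.length = l.length := by rw [hL, List.length_map]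
      rw [← h3, ← h2]
      push_cast
      rfl
    -- key inequality
    have hkey : ∀ x : Vtx d, (L.count x : ℝ) ≤ r * Real.sqrt (colInf f χ x) := by
      intro x
      have h1 : (L.count x : ℝ) ≤ (colInf f χ x : ℝ) := by exact_mod_cast hbound1 x
      have hcnt0 : (0:ℝ) ≤ (L.count x : ℝ) := Nat.cast_nonneg _
      have hs1 : Real.sqrt (L.count x) ≤ r := by
        calc Real.sqrt (L.count x) ≤ Real.sqrt (r ^ 2) := Real.sqrt_le_sqrt (hbound2 x)
          _ = r := Real.sqrt_sq hr0
      have hs2 : Real.sqrt (L.count x) ≤ Real.sqrt (colInf f χ x) := Real.sqrt_le_sqrt h1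
      calc (L.count x : ℝ) = Real.sqrt (L.count x) * Real.sqrt (L.count x) :=
            (Real.mul_self_sqrt hcnt0).symm
        _ ≤ r * Real.sqrt (colInf f χ x) :=
            mul_le_mul hs1 hs2 (Real.sqrt_nonneg _) hr0
    have hmain : C * r * (n:ℝ) ≤ r * ∑ x : Vtx d, Real.sqrt (colInf f χ x) := by
      calc C * r * (n:ℝ) ≤ (Multiset.card P : ℝ) := hPcard
        _ = (l.length : ℝ) := by rw [hPl]; simp
        _ = ∑ x : Vtx d, (L.count x : ℝ) := hsumcnt.symm
        _ ≤ ∑ x : Vtx d, r * Real.sqrt (colInf f χ x) :=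
            Finset.sum_le_sum (fun x _ => hkey x)
        _ = r * ∑ x : Vtx d, Real.sqrt (colInf f χ x) := (Finset.mul_sum _ _ _).symm
    have hCn : C * (n:ℝ) ≤ ∑ x : Vtx d, Real.sqrt (colInf f χ x) := by
      have hrpos : (0:ℝ) < r := lt_of_lt_of_le one_pos hr1
      have h' : r * (C * (n:ℝ)) ≤ r * ∑ x : Vtx d, Real.sqrt (colInf f χ x) := by
        calc r * (C * (n:ℝ)) = C * r * (n:ℝ) := by ring
          _ ≤ _ := hmain
      exact le_of_mul_le_mul_left h' hrpos
    -- distance to monotonicity bound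
    obtain ⟨S', T', φ, hcert⟩ := hvol.1
    obtain ⟨hS'S, hT'S, hcard', hmatch⟩ := hcert
    set U : Finset (Vtx d) := S' ∪ T' with hU
    set g : Vtx d → Bool := fun x => decide (∃ y, hle y x ∧ y ∉ U ∧ f y = true) with hgdef
    have hgmono : MonotoneB g := by
      intro x y hxy hgx
      rw [hgdef] at hgx ⊢
      simp only [decide_eq_true_eq] at hgx ⊢
      obtain ⟨z, hz1, hz2, hz3⟩ := hgx
      exact ⟨z, fun i hi => hxy i (hz1 i hi), hz2, hz3⟩
    have hcover : ∀ a b : Vtx d, a ∈ S → b ∉ S → hlt a b → a ∈ S' ∨ b ∈ T' := by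
      intro a b ha hb hab
      by_contra hcon
      push_neg at hcon
      have := hvol.2 (n+1) _ _ _
        (cert_extend ⟨hS'S, hT'S, hcard', hmatch⟩ ha hb hab hcon.1 hcon.2)
      omega
    have hdiff : Finset.univ.filter (fun x => f x ≠ g x) ⊆ U := by
      intro x hx
      simp only [Finset.mem_filter] at hx
      by_contra hxU
      apply hx.2
      by_cases hfx : f x = true
      · rw [hfx, hgdef]
        symm
        rw [decide_eq_true_eq]
        exact ⟨x, fun i hi => hi, hxU, hfx⟩
      · have hfx' : f x = false := Bool.eq_false_iff.mpr hfx
        rw [hfx', hgdef]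
        symm
        rw [decide_eq_false_iff_not]
        rintro ⟨y, hy1, hy2, hy3⟩
        have hyx : y ≠ x := fun h => hfx (h ▸ hy3)
        rcases hcover y x ((hmemS y).mpr hy3) (fun h => hfx ((hmemS x).mp h)) ⟨hy1, hyx⟩ with h | h
        · exact hy2 (Finset.mem_union_left _ h)
        · exact hxU (Finset.mem_union_right _ h)
    have hcard2n : ((Finset.univ.filter (fun x => f x ≠ g x)).card : ℝ) ≤ 2 * (n:ℝ) := by
      have : (Finset.univ.filter (fun x => f x ≠ g x)).card ≤ 2 * n := by
        calc (Finset.univ.filter (fun x => f x ≠ g x)).card ≤ U.card :=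
              Finset.card_le_card hdiff
          _ ≤ S'.card + T'.card := Finset.card_union_le _ _
          _ = 2 * n := by rw [matched_card hmatch, hcard']; ring
      exact_mod_cast this
    have h2d : (0:ℝ) < 2 ^ d := by positivity
    have hε : ε ≤ 2 * (n:ℝ) / 2 ^ d := by
      refine le_trans (hmin g hgmono) ?_
      gcongr
    rw [ge_iff_le]
    calc (C/2) * ε ≤ (C/2) * (2 * (n:ℝ) / 2 ^ d) :=
          mul_le_mul_of_nonneg_left hε (le_of_lt (half_pos hC))
      _ = (C * (n:ℝ)) / 2 ^ d := by ring
      _ ≤ (∑ x : Vtx d, Real.sqrt (colInf f χ x)) / 2 ^ d := by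
          gcongr
      _ = ((2:ℝ) ^ d)⁻¹ * ∑ x : Vtx d, Real.sqrt (colInf f χ x) := by ring
end

section
/- Let $f:\{0,1\}^d \to \{0,1\}$ with $S = f^{-1}(1)$, and let $(S',T';\phi)$ be a matched pair with $S' \subseteq S$ and $T' \subseteq \overline{S}$. Then the number of violated edges of $f$ is at least $|S'|$. (Equivalently: any set of hypercube edges whose removal disconnects $S$ from $\overline{S}$ in the directed sense and which contains all violated edges has size at least the directed volume of $S$.) -/
open scoped Classical

def Mono {d : ℕ} (g : Vtx d → Bool) : Prop := ∀ ⦃x y : Vtx d⦄, hle x y → g x = true → g y = true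

lemma wt_cons {d : ℕ} (b : Bool) (x : Vtx d) :
    wt (Fin.cons b x) = (if b = true then 1 else 0) + wt x := by
  unfold wt
  rw [Finset.card_filter, Finset.card_filter, Fin.sum_univ_succ]
  simp

lemma hle_cons {d : ℕ} {x y : Vtx d} {b c : Bool} (hbc : b = true → c = true)
    (h : hle x y) : hle (Fin.cons b x) (Fin.cons c y) := by
  intro i
  refine Fin.cases ?_ ?_ i
  · simpa using hbc
  · intro j; simpa using h j

lemma cons_inj {d : ℕ} (b : Bool) : Function.Injective (fun x : Vtx d => (Fin.cons b x : Vtx (d+1))) := by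
  intro x y h
  have := congrArg Fin.tail h
  simpa [Fin.tail_cons] using this

lemma card_filter_cons {d : ℕ} (p : Vtx (d+1) → Prop) [DecidablePred p]
    (p0 p1 : Vtx d → Prop) [DecidablePred p0] [DecidablePred p1]
    (h0 : ∀ x, p (Fin.cons false x) ↔ p0 x) (h1 : ∀ x, p (Fin.cons true x) ↔ p1 x) :
    (Finset.univ.filter p).card
      = (Finset.univ.filter p0).card + (Finset.univ.filter p1).card := by
  have key : Finset.univ.filter p
      = ((Finset.univ.filter p0).image (fun x => (Fin.cons false x : Vtx (d+1))))
        ∪ ((Finset.univ.filter p1).image (fun x => (Fin.cons true x : Vtx (d+1)))) := by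
    ext z
    simp only [Finset.mem_filter, Finset.mem_univ, true_and, Finset.mem_union,
      Finset.mem_image]
    constructor
    · intro hz
      cases hz0 : z 0 with
      | false =>
        left
        refine ⟨Fin.tail z, ?_, ?_⟩
        · apply (h0 _).1
          rw [← hz0, Fin.cons_self_tail]
          exact hz
        · rw [← hz0, Fin.cons_self_tail]
      | true =>
        right
        refine ⟨Fin.tail z, ?_, ?_⟩
        · apply (h1 _).1
          rw [← hz0, Fin.cons_self_tail]
          exact hz
        · rw [← hz0, Fin.cons_self_tail]
    · rintro (⟨x, hx, rfl⟩ | ⟨x, hx, rfl⟩)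
      · exact (h0 _).2 hx
      · exact (h1 _).2 hx
  have hdisj : Disjoint ((Finset.univ.filter p0).image (fun x => (Fin.cons false x : Vtx (d+1))))
      ((Finset.univ.filter p1).image (fun x => (Fin.cons true x : Vtx (d+1)))) := by
    rw [Finset.disjoint_left]
    rintro a ha hb
    obtain ⟨u, -, rfl⟩ := Finset.mem_image.1 ha
    obtain ⟨v, -, hv⟩ := Finset.mem_image.1 hb
    have := congrFun hv 0
    simp at this
  rw [key, Finset.card_union_of_disjoint hdisj,
    Finset.card_image_of_injective _ (cons_inj false),
    Finset.card_image_of_injective _ (cons_inj true)]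

lemma isEdge_cons {d : ℕ} {x y : Vtx d} (b : Bool) (h : IsEdge x y) :
    IsEdge (Fin.cons b x) (Fin.cons b y) := by
  refine ⟨hle_cons (fun h => h) h.1, ?_⟩
  rw [wt_cons, wt_cons, h.2]; omega

lemma isEdge_cross {d : ℕ} (x : Vtx d) :
    IsEdge (Fin.cons false x) (Fin.cons true x) := by
  refine ⟨hle_cons (fun h => by simp at h) (fun i hi => hi), ?_⟩
  rw [wt_cons, wt_cons]; simp; omega

lemma violated_split {d : ℕ} (f : Vtx (d+1) → Bool) :
    (violatedEdges d (fun x => f (Fin.cons false x))).card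
      + (violatedEdges d (fun x => f (Fin.cons true x))).card
      + (Finset.univ.filter (fun x : Vtx d =>
            f (Fin.cons false x) = true ∧ f (Fin.cons true x) = false)).card
      ≤ (violatedEdges (d+1) f).card := by
  classical
  set m0 : Vtx d × Vtx d → Vtx (d+1) × Vtx (d+1) :=
    fun e => (Fin.cons false e.1, Fin.cons false e.2) with hm0
  set m1 : Vtx d × Vtx d → Vtx (d+1) × Vtx (d+1) :=
    fun e => (Fin.cons true e.1, Fin.cons true e.2) with hm1
  set mc : Vtx d → Vtx (d+1) × Vtx (d+1) :=
    fun x => (Fin.cons false x, Fin.cons true x) with hmc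
  set E0 := (violatedEdges d (fun x => f (Fin.cons false x))).image m0 with hE0
  set E1 := (violatedEdges d (fun x => f (Fin.cons true x))).image m1 with hE1
  set Ec := (Finset.univ.filter (fun x : Vtx d =>
      f (Fin.cons false x) = true ∧ f (Fin.cons true x) = false)).image mc with hEc
  have hinj0 : Function.Injective m0 := by
    intro a b h
    have h1 := cons_inj false (congrArg Prod.fst h)
    have h2 := cons_inj false (congrArg Prod.snd h)
    exact Prod.ext h1 h2
  have hinj1 : Function.Injective m1 := by
    intro a b h
    exact Prod.ext (cons_inj true (congrArg Prod.fst h)) (cons_inj true (congrArg Prod.snd h))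
  have hinjc : Function.Injective mc := by
    intro a b h
    exact cons_inj false (congrArg Prod.fst h)
  have hc0 : E0.card = (violatedEdges d (fun x => f (Fin.cons false x))).card :=
    Finset.card_image_of_injective _ hinj0
  have hc1 : E1.card = (violatedEdges d (fun x => f (Fin.cons true x))).card :=
    Finset.card_image_of_injective _ hinj1
  have hcc : Ec.card = (Finset.univ.filter (fun x : Vtx d =>
      f (Fin.cons false x) = true ∧ f (Fin.cons true x) = false)).card :=
    Finset.card_image_of_injective _ hinjc
  have hd01 : Disjoint E0 E1 := by
    rw [Finset.disjoint_left]
    rintro a ha hb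
    obtain ⟨u, -, rfl⟩ := Finset.mem_image.1 ha
    obtain ⟨v, -, hv⟩ := Finset.mem_image.1 hb
    have := congrFun (congrArg Prod.fst hv) 0
    simp [hm0, hm1] at this
  have hd0c : Disjoint E0 Ec := by
    rw [Finset.disjoint_left]
    rintro a ha hb
    obtain ⟨u, -, rfl⟩ := Finset.mem_image.1 ha
    obtain ⟨v, -, hv⟩ := Finset.mem_image.1 hb
    have := congrFun (congrArg Prod.snd hv) 0
    simp [hm0, hmc] at this
  have hd1c : Disjoint E1 Ec := by
    rw [Finset.disjoint_left]
    rintro a ha hb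
    obtain ⟨u, -, rfl⟩ := Finset.mem_image.1 ha
    obtain ⟨v, -, hv⟩ := Finset.mem_image.1 hb
    have := congrFun (congrArg Prod.fst hv) 0
    simp [hm1, hmc] at this
  have hsub : E0 ∪ E1 ∪ Ec ⊆ violatedEdges (d+1) f := by
    intro a ha
    rcases Finset.mem_union.1 ha with ha | ha
    · rcases Finset.mem_union.1 ha with ha | ha
      · obtain ⟨u, hu, rfl⟩ := Finset.mem_image.1 ha
        rw [violatedEdges, Finset.mem_filter] at hu ⊢
        exact ⟨Finset.mem_univ _, isEdge_cons false hu.2.1, hu.2.2⟩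
      · obtain ⟨u, hu, rfl⟩ := Finset.mem_image.1 ha
        rw [violatedEdges, Finset.mem_filter] at hu ⊢
        exact ⟨Finset.mem_univ _, isEdge_cons true hu.2.1, hu.2.2⟩
    · obtain ⟨u, hu, rfl⟩ := Finset.mem_image.1 ha
      rw [Finset.mem_filter] at hu
      rw [violatedEdges, Finset.mem_filter]
      exact ⟨Finset.mem_univ _, isEdge_cross u, hu.2⟩
  calc (violatedEdges d (fun x => f (Fin.cons false x))).card
      + (violatedEdges d (fun x => f (Fin.cons true x))).card
      + (Finset.univ.filter (fun x : Vtx d =>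
            f (Fin.cons false x) = true ∧ f (Fin.cons true x) = false)).card
      = (E0 ∪ E1 ∪ Ec).card := by
        rw [Finset.card_union_of_disjoint (Finset.disjoint_union_left.2 ⟨hd0c, hd1c⟩),
          Finset.card_union_of_disjoint hd01, hc0, hc1, hcc]
    _ ≤ (violatedEdges (d+1) f).card := Finset.card_le_card hsub

lemma key_bool (a b c e : Bool) :
    ((if a ≠ (c && e) then 1 else 0) + (if b ≠ (c || e) then 1 else 0) : ℕ) ≤
    (if a ≠ c then 1 else 0) + (if b ≠ e then 1 else 0)
      + 2 * (if a = true ∧ b = false then 1 else 0) := by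
  cases a <;> cases b <;> cases c <;> cases e <;> simp

lemma exists_mono_approx : ∀ (d : ℕ) (f : Vtx d → Bool),
    ∃ g : Vtx d → Bool, Mono g ∧
      (Finset.univ.filter (fun x => f x ≠ g x)).card ≤ (violatedEdges d f).card := by
  intro d
  induction d with
  | zero =>
    intro f
    refine ⟨f, ?_, ?_⟩
    · intro x y _ hx
      have : x = y := by funext i; exact absurd i.2 (by omega)
      rwa [← this]
    · simp
  | succ d ih =>
    intro f
    obtain ⟨g0, hg0m, hg0c⟩ := ih (fun x => f (Fin.cons false x))
    obtain ⟨g1, hg1m, hg1c⟩ := ih (fun x => f (Fin.cons true x))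
    set gA : Vtx (d+1) → Bool :=
      fun z => if z 0 = true then (g0 (Fin.tail z) || g1 (Fin.tail z)) else g0 (Fin.tail z)
      with hgA
    set gB : Vtx (d+1) → Bool :=
      fun z => if z 0 = true then g1 (Fin.tail z) else (g0 (Fin.tail z) && g1 (Fin.tail z))
      with hgB
    have hmA : Mono gA := by
      intro z w h hz
      have ht : hle (Fin.tail z) (Fin.tail w) := fun i hi => h i.succ hi
      have h0 : z 0 = true → w 0 = true := h 0
      by_cases hz0 : z 0 = true
      · have hw0 : w 0 = true := h0 hz0
        rw [hgA] at hz ⊢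
        simp only [hz0, hw0, if_true] at hz ⊢
        rcases Bool.or_eq_true_iff.1 hz with h' | h'
        · exact Bool.or_eq_true_iff.2 (Or.inl (hg0m ht h'))
        · exact Bool.or_eq_true_iff.2 (Or.inr (hg1m ht h'))
      · rw [hgA] at hz ⊢
        simp only [hz0, if_false] at hz
        by_cases hw0 : w 0 = true
        · simp only [hw0, if_true]
          exact Bool.or_eq_true_iff.2 (Or.inl (hg0m ht hz))
        · simp only [hw0, if_false]
          exact hg0m ht hz
    have hmB : Mono gB := by
      intro z w h hz
      have ht : hle (Fin.tail z) (Fin.tail w) := fun i hi => h i.succ hi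
      have h0 : z 0 = true → w 0 = true := h 0
      by_cases hz0 : z 0 = true
      · have hw0 : w 0 = true := h0 hz0
        rw [hgB] at hz ⊢
        simp only [hz0, hw0, if_true] at hz ⊢
        exact hg1m ht hz
      · rw [hgB] at hz ⊢
        simp only [hz0, if_false] at hz
        rcases Bool.and_eq_true_iff.1 hz with ⟨h1, h2⟩
        by_cases hw0 : w 0 = true
        · simp only [hw0, if_true]
          exact hg1m ht h2
        · simp only [hw0, if_false]
          exact Bool.and_eq_true_iff.2 ⟨hg0m ht h1, hg1m ht h2⟩
    -- cost computations
    have costA : (Finset.univ.filter (fun z => f z ≠ gA z)).card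
        = (Finset.univ.filter (fun x : Vtx d => f (Fin.cons false x) ≠ g0 x)).card
          + (Finset.univ.filter (fun x : Vtx d =>
              f (Fin.cons true x) ≠ (g0 x || g1 x))).card := by
      exact card_filter_cons _ _ _ (fun x => by simp [hgA, Fin.tail_cons])
        (fun x => by simp [hgA, Fin.tail_cons])
    have costB : (Finset.univ.filter (fun z => f z ≠ gB z)).card
        = (Finset.univ.filter (fun x : Vtx d => f (Fin.cons false x) ≠ (g0 x && g1 x))).card
          + (Finset.univ.filter (fun x : Vtx d => f (Fin.cons true x) ≠ g1 x)).card := by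
      exact card_filter_cons _ _ _ (fun x => by simp [hgB, Fin.tail_cons])
        (fun x => by simp [hgB, Fin.tail_cons])
    -- the averaging bound
    have hsum : (Finset.univ.filter (fun x : Vtx d => f (Fin.cons false x) ≠ (g0 x && g1 x))).card
        + (Finset.univ.filter (fun x : Vtx d => f (Fin.cons true x) ≠ (g0 x || g1 x))).card
        ≤ (Finset.univ.filter (fun x : Vtx d => f (Fin.cons false x) ≠ g0 x)).card
          + (Finset.univ.filter (fun x : Vtx d => f (Fin.cons true x) ≠ g1 x)).card
          + 2 * (Finset.univ.filter (fun x : Vtx d =>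
              f (Fin.cons false x) = true ∧ f (Fin.cons true x) = false)).card := by
      rw [Finset.card_filter, Finset.card_filter, Finset.card_filter, Finset.card_filter,
        Finset.card_filter, ← Finset.sum_add_distrib, ← Finset.sum_add_distrib,
        Finset.mul_sum, ← Finset.sum_add_distrib]
      apply Finset.sum_le_sum
      intro x _
      exact key_bool (f (Fin.cons false x)) (f (Fin.cons true x)) (g0 x) (g1 x)
    have hV := violated_split f
    by_cases hAB : (Finset.univ.filter (fun z => f z ≠ gA z)).card
        ≤ (Finset.univ.filter (fun z => f z ≠ gB z)).card
    · exact ⟨gA, hmA, by omega⟩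
    · exact ⟨gB, hmB, by omega⟩

/-- **Violated edges dominate certificates.** If `(S',T';φ)` is a matched pair with
`S' ⊆ f⁻¹(1)` and `T' ⊆ f⁻¹(0)`, then `f` has at least `|S'|` violated edges. -/
theorem violated_edges_ge_certificate (d : ℕ) (f : Vtx d → Bool)
    (S' T' : Finset (Vtx d))
    (hS' : ∀ s ∈ S', f s = true) (hT' : ∀ t ∈ T', f t = false)
    (φ : Vtx d → Vtx d) (hmp : MatchedFrom S' T' φ) :
    S'.card ≤ (violatedEdges d f).card := by
  obtain ⟨g, hg, hcard⟩ := exists_mono_approx d f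
  have hmain : S'.card ≤ (Finset.univ.filter (fun x => f x ≠ g x)).card := by
    apply Finset.card_le_card_of_injOn (fun s => if g s = true then φ s else s)
    · intro s hs
      simp only [Finset.mem_coe, Finset.mem_filter, Finset.mem_univ, true_and]
      by_cases h : g s = true
      · rw [if_pos h]
        have hT : φ s ∈ T' := hmp.1.mapsTo hs
        have hf : f (φ s) = false := hT' _ hT
        have hgφ : g (φ s) = true := hg (hmp.2 s hs).1 h
        rw [hf, hgφ]; simp
      · rw [if_neg h]
        rw [hS' s hs]
        exact fun hc => h hc.symm
    · intro s1 h1 s2 h2 heq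
      simp only at heq
      by_cases hg1 : g s1 = true <;> by_cases hg2 : g s2 = true
      · rw [if_pos hg1, if_pos hg2] at heq
        exact hmp.1.injOn h1 h2 heq
      · rw [if_pos hg1, if_neg hg2] at heq
        exfalso
        have hf1 : f (φ s1) = false := hT' _ (hmp.1.mapsTo h1)
        have hf2 : f s2 = true := hS' s2 h2
        rw [heq, hf2] at hf1
        simp at hf1
      · rw [if_neg hg1, if_pos hg2] at heq
        exfalso
        have hf2 : f (φ s2) = false := hT' _ (hmp.1.mapsTo h2)
        have hf1 : f s1 = true := hS' s1 h1
        rw [← heq, hf1] at hf2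
        simp at hf2
      · rwa [if_neg hg1, if_neg hg2] at heq
  exact le_trans hmain hcard
end
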